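/- arXiv:2211.10505 — 9 statements merged into one kernel-verified Lean document; each statement's English description precedes it below -/
import Mathlib

section
/- Let G be a group of orientation-preserving homeomorphisms of ℝ such that every element of G other than the identity has exactly one fixed point. Then there is a point x₀ ∈ ℝ with g(x₀) = x₀ for every g ∈ G. -/
/-- The group of self-homeomorphisms of a topological space,
with `(f * g) x = f (g x)`. -/
instance homeomorphSelfGroup {X : Type*} [TopologicalSpace X] : Group (X ≃ₜ X) where
  mul f g := g.trans f
  one := Homeomorph.refl X
  inv := Homeomorph.symm
  mul_assoc _ _ _ := rfl
  one_mul _ := rfl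
  mul_one _ := rfl
  inv_mul_cancel f := Homeomorph.ext fun x => f.symm_apply_apply x

namespace SolodovAux

abbrev H := ℝ ≃ₜ ℝ

lemma mul_app (f g : H) (x : ℝ) : (f * g) x = f (g x) := rfl
lemma one_app (x : ℝ) : (1 : H) x = x := rfl
lemma app_inv (f : H) (x : ℝ) : f ((f⁻¹ : H) x) = x := f.apply_symm_apply x
lemma inv_app_self (f : H) (x : ℝ) : (f⁻¹ : H) (f x) = x := f.symm_apply_apply x
lemma pow_succ_app (f : H) (n : ℕ) (x : ℝ) : (f ^ (n+1)) x = f ((f ^ n) x) := by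
  rw [pow_succ']; rfl
lemma pow_add_app (f : H) (a b : ℕ) (x : ℝ) : (f ^ (a+b)) x = (f ^ a) ((f ^ b) x) := by
  rw [pow_add]; rfl

/-- repelling fixed point at `p` -/
def RepAt (f : H) (p : ℝ) : Prop := (∀ x, x < p → f x < x) ∧ (∀ x, p < x → x < f x)
/-- attracting fixed point at `p` -/
def AttAt (f : H) (p : ℝ) : Prop := (∀ x, x < p → x < f x) ∧ (∀ x, p < x → f x < x)
/-- eventually (at +∞) strictly less -/
def LTE (f g : H) : Prop := ∃ c : ℝ, ∀ x, c < x → f x < g x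
def LEE (f g : H) : Prop := f = g ∨ LTE f g

lemma lee_of_lte {f g : H} (h : LTE f g) : LEE f g := Or.inr h

lemma lte_trans {f g h : H} (h1 : LTE f g) (h2 : LTE g h) : LTE f h := by
  obtain ⟨c1, hc1⟩ := h1; obtain ⟨c2, hc2⟩ := h2
  exact ⟨max c1 c2, fun x hx =>
    lt_trans (hc1 x ((le_max_left _ _).trans_lt hx)) (hc2 x ((le_max_right _ _).trans_lt hx))⟩

lemma lte_irrefl {f : H} (h : LTE f f) : False := by
  obtain ⟨c, hc⟩ := h; exact lt_irrefl _ (hc (c+1) (by linarith))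

lemma lee_trans {f g h : H} (h1 : LEE f g) (h2 : LEE g h) : LEE f h := by
  rcases h1 with rfl | h1
  · exact h2
  · rcases h2 with rfl | h2
    · exact Or.inr h1
    · exact Or.inr (lte_trans h1 h2)

lemma lee_lte {f g h : H} (h1 : LEE f g) (h2 : LTE g h) : LTE f h := by
  rcases h1 with rfl | h1
  · exact h2
  · exact lte_trans h1 h2

lemma lte_lee {f g h : H} (h1 : LTE f g) (h2 : LEE g h) : LTE f h := by
  rcases h2 with rfl | h2
  · exact h1
  · exact lte_trans h1 h2

variable {G : Subgroup H}

lemma lte_mul_left (hmono : ∀ g ∈ G, StrictMono (g : ℝ → ℝ)) {k f g : H} (hk : k ∈ G)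
    (h : LTE f g) : LTE (k*f) (k*g) := by
  obtain ⟨c, hc⟩ := h
  exact ⟨c, fun x hx => hmono k hk (hc x hx)⟩

lemma lte_mul_right (hmono : ∀ g ∈ G, StrictMono (g : ℝ → ℝ)) {k f g : H} (hk : k ∈ G)
    (h : LTE f g) : LTE (f*k) (g*k) := by
  obtain ⟨c, hc⟩ := h
  refine ⟨(k⁻¹ : H) c, fun x hx => ?_⟩
  have h1 : c < k x := by
    have := hmono k hk hx
    rwa [app_inv] at this
  exact hc (k x) h1

lemma lee_mul_left (hmono : ∀ g ∈ G, StrictMono (g : ℝ → ℝ)) {k f g : H} (hk : k ∈ G)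
    (h : LEE f g) : LEE (k*f) (k*g) := by
  rcases h with rfl | h
  · exact Or.inl rfl
  · exact Or.inr (lte_mul_left hmono hk h)

lemma lee_mul_right (hmono : ∀ g ∈ G, StrictMono (g : ℝ → ℝ)) {k f g : H} (hk : k ∈ G)
    (h : LEE f g) : LEE (f*k) (g*k) := by
  rcases h with rfl | h
  · exact Or.inl rfl
  · exact Or.inr (lte_mul_right hmono hk h)

lemma lte_inv (hmono : ∀ g ∈ G, StrictMono (g : ℝ → ℝ)) {a b : H} (ha : a ∈ G) (hb : b ∈ G)
    (h : LTE a b) : LTE b⁻¹ a⁻¹ := by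
  obtain ⟨c, hc⟩ := h
  refine ⟨a c, fun x hx => ?_⟩
  have h1 : c < (a⁻¹ : H) x := by
    have h2 : a c < a ((a⁻¹:H) x) := by rwa [app_inv]
    exact (hmono a ha).lt_iff_lt.mp h2
  have h2 : x < b ((a⁻¹:H) x) := by
    have h3 := hc _ h1
    rwa [app_inv] at h3
  have h4 : b ((b⁻¹:H) x) < b ((a⁻¹:H) x) := by rwa [app_inv]
  exact (hmono b hb).lt_iff_lt.mp h4

lemma lee_inv (hmono : ∀ g ∈ G, StrictMono (g : ℝ → ℝ)) {a b : H} (ha : a ∈ G) (hb : b ∈ G)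
    (h : LEE a b) : LEE b⁻¹ a⁻¹ := by
  rcases h with rfl | h
  · exact Or.inl rfl
  · exact Or.inr (lte_inv hmono ha hb h)


lemma one_lte_pow (hmono : ∀ g ∈ G, StrictMono (g : ℝ → ℝ)) {u : H} (hu : u ∈ G)
    (hupos : LTE 1 u) : ∀ n : ℕ, LTE 1 (u^(n+1)) := by
  intro n; induction n with
  | zero => simpa using hupos
  | succ n ih =>
    have h1 : LTE (u^(n+1)) (u^(n+1) * u) := by
      have h2 := lte_mul_left hmono (pow_mem hu (n+1)) hupos
      rwa [mul_one] at h2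
    have h2 : u^(n+1)*u = u^(n+1+1) := (pow_succ u (n+1)).symm
    exact lte_trans ih (h2 ▸ h1)

lemma zpow_lt (hmono : ∀ g ∈ G, StrictMono (g : ℝ → ℝ)) {u : H} (hu : u ∈ G)
    (hupos : LTE 1 u) {m k : ℤ} (hmk : m < k) : LTE (u^m) (u^k) := by
  obtain ⟨n, hn⟩ : ∃ n : ℕ, k - m = (n:ℤ)+1 := ⟨(k-m-1).toNat, by omega⟩
  have h1 : LTE 1 (u^(k-m)) := by
    rw [hn, show ((n:ℤ)+1) = ((n+1:ℕ):ℤ) by push_cast; ring, zpow_natCast]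
    exact one_lte_pow hmono hu hupos n
  have h2 := lte_mul_left hmono (zpow_mem hu m) h1
  rwa [mul_one, ← zpow_add, show m + (k-m) = k by ring] at h2

lemma M_lt (hmono : ∀ g ∈ G, StrictMono (g : ℝ → ℝ)) {u : H} (hu : u ∈ G)
    (hupos : LTE 1 u) {w : H} {m k : ℤ} (h1 : LEE (u^m) w) (h2 : LTE w (u^k)) : m < k := by
  by_contra hc; push_neg at hc
  have h3 : LEE (u^k) (u^m) := by
    rcases eq_or_lt_of_le hc with he | hl
    · exact Or.inl (by rw [he])
    · exact Or.inr (zpow_lt hmono hu hupos hl)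
  exact lte_irrefl (lte_lee (lte_lee h2 h3) h1)

lemma M_lower (hmono : ∀ g ∈ G, StrictMono (g : ℝ → ℝ)) {u : H} (hu : u ∈ G)
    {v w : H} (hw : w ∈ G) {s t : ℤ}
    (h1 : LEE (u^s) v) (h2 : LEE (u^t) w) : LEE (u^(s+t)) (v*w) := by
  have a1 : LEE (u^s * u^t) (u^s * w) := lee_mul_left hmono (zpow_mem hu s) h2
  have a2 : LEE (u^s * w) (v * w) := lee_mul_right hmono hw h1
  have a3 := lee_trans a1 a2
  rwa [← zpow_add] at a3

lemma M_upper (hmono : ∀ g ∈ G, StrictMono (g : ℝ → ℝ)) {u : H} (hu : u ∈ G)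
    {v w : H} (hv : v ∈ G) {s t : ℤ}
    (h1 : LTE v (u^s)) (h2 : LTE w (u^t)) : LTE (v*w) (u^(s+t)) := by
  have a1 : LTE (v * w) (v * u^t) := lte_mul_left hmono hv h2
  have a2 : LTE (v * u^t) (u^s * u^t) := lte_mul_right hmono (zpow_mem hu t) h1
  have a3 := lte_trans a1 a2
  rwa [← zpow_add] at a3


lemma subB (hmono : ∀ g ∈ G, StrictMono (g : ℝ → ℝ)) {x y : H} (hy : y ∈ G)
    (hxy : LEE (x*y) (y*x)) : ∀ n : ℕ, LEE (x * y^n) (y^n * x) := by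
  intro n; induction n with
  | zero => exact Or.inl (by rw [pow_zero, one_mul, mul_one])
  | succ n ih =>
    have h1 : LEE ((x*y)*y^n) ((y*x)*y^n) := lee_mul_right hmono (pow_mem hy n) hxy
    have h2 : LEE (y*(x*y^n)) (y*(y^n*x)) := lee_mul_left hmono hy ih
    have e1 : x * y^(n+1) = (x*y)*y^n := by group
    have e2 : (y*x)*y^n = y*(x*y^n) := by group
    have e3 : y*(y^n*x) = y^(n+1)*x := by group
    rw [e1, ← e3]
    exact lee_trans (e2 ▸ h1) h2

lemma subB' (hmono : ∀ g ∈ G, StrictMono (g : ℝ → ℝ)) {x y : H} (hx : x ∈ G)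
    (hxy : LEE (x*y) (y*x)) : ∀ n : ℕ, LEE (x^n * y) (y * x^n) := by
  intro n; induction n with
  | zero => exact Or.inl (by rw [pow_zero, one_mul, mul_one])
  | succ n ih =>
    have h1 : LEE (x*(x^n*y)) (x*(y*x^n)) := lee_mul_left hmono hx ih
    have h2 : LEE ((x*y)*x^n) ((y*x)*x^n) := lee_mul_right hmono (pow_mem hx n) hxy
    have e1 : x^(n+1)*y = x*(x^n*y) := by group
    have e2 : x*(y*x^n) = (x*y)*x^n := by group
    have e3 : (y*x)*x^n = y*x^(n+1) := by group
    rw [e1, ← e3]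
    exact lee_trans (e2 ▸ h1) h2

lemma sand_a (hmono : ∀ g ∈ G, StrictMono (g : ℝ → ℝ)) {x y : H} (hx : x ∈ G) (hy : y ∈ G)
    (hxy : LEE (x*y) (y*x)) : ∀ n : ℕ, LEE (x^n * y^n) ((x*y)^n) := by
  intro n; induction n with
  | zero => exact Or.inl (by rw [pow_zero, pow_zero, pow_zero, one_mul])
  | succ n ih =>
    have h1 : LEE ((x^n*y^n)*(x*y)) ((x*y)^n*(x*y)) := lee_mul_right hmono (mul_mem hx hy) ih
    have h2 : LEE ((x^n*(x*y^n))*y) ((x^n*(y^n*x))*y) :=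
      lee_mul_right hmono hy (lee_mul_left hmono (pow_mem hx n) (subB hmono hy hxy n))
    have e1 : (x^n*(x*y^n))*y = x^(n+1)*y^(n+1) := by group
    have e2 : (x^n*(y^n*x))*y = (x^n*y^n)*(x*y) := by group
    have e3 : (x*y)^n*(x*y) = (x*y)^(n+1) := (pow_succ _ n).symm
    rw [e2] at h2
    rw [e1] at h2
    rw [e3] at h1
    exact lee_trans h2 h1

lemma sand_c (hmono : ∀ g ∈ G, StrictMono (g : ℝ → ℝ)) {x y : H} (hx : x ∈ G) (hy : y ∈ G)
    (hxy : LEE (x*y) (y*x)) : ∀ n : ℕ, LEE (x^n * y^n) ((y*x)^n) := by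
  intro n; induction n with
  | zero => exact Or.inl (by rw [pow_zero, pow_zero, pow_zero, one_mul])
  | succ n ih =>
    have h1 : LEE ((y*x)*(x^n*y^n)) ((y*x)*(y*x)^n) := lee_mul_left hmono (mul_mem hy hx) ih
    have h2 : LEE ((x^(n+1)*y)*y^n) ((y*x^(n+1))*y^n) :=
      lee_mul_right hmono (pow_mem hy n) (subB' hmono hx hxy (n+1))
    have e1 : (x^(n+1)*y)*y^n = x^(n+1)*y^(n+1) := by group
    have e2 : (y*x^(n+1))*y^n = (y*x)*(x^n*y^n) := by group
    have e3 : (y*x)*(y*x)^n = (y*x)^(n+1) := by group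
    rw [e1, e2] at h2
    rw [e3] at h1
    exact lee_trans h2 h1

lemma sand_d (hmono : ∀ g ∈ G, StrictMono (g : ℝ → ℝ)) {x y : H} (hx : x ∈ G) (hy : y ∈ G)
    (hxy : LEE (x*y) (y*x)) : ∀ n : ℕ, LEE ((y*x)^n) (y^n * x^n) := by
  intro n; induction n with
  | zero => exact Or.inl (by rw [pow_zero, pow_zero, pow_zero, one_mul])
  | succ n ih =>
    have h1 : LEE ((y*x)^n*(y*x)) ((y^n*x^n)*(y*x)) := lee_mul_right hmono (mul_mem hy hx) ih
    have h2 : LEE ((y^n*(x^n*y))*x) ((y^n*(y*x^n))*x) :=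
      lee_mul_right hmono hx (lee_mul_left hmono (pow_mem hy n) (subB' hmono hx hxy n))
    have e1 : (y*x)^n*(y*x) = (y*x)^(n+1) := (pow_succ _ n).symm
    have e2 : (y^n*(x^n*y))*x = (y^n*x^n)*(y*x) := by group
    have e3 : (y^n*(y*x^n))*x = y^(n+1)*x^(n+1) := by group
    rw [e2, e3] at h2
    rw [e1] at h1
    exact lee_trans h1 h2


lemma rep_orbit {d : H} {p : ℝ} (hrep : RepAt d p) {y : ℝ} (hy : p < y) :
    ∀ n : ℕ, p < (d^n) y ∧ y ≤ (d^n) y := by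
  intro n; induction n with
  | zero =>
    rw [pow_zero]
    exact ⟨hy, le_refl y⟩
  | succ n ih =>
    have h1 : (d^(n+1)) y = d ((d^n) y) := pow_succ_app d n y
    have h2 : (d^n) y < d ((d^n) y) := hrep.2 _ ih.1
    rw [h1]
    exact ⟨ih.1.trans h2, ih.2.trans h2.le⟩

lemma rep_orbit' {d : H} {p : ℝ} (hrep : RepAt d p) {y : ℝ} (hy : y < p) :
    ∀ n : ℕ, (d^n) y < p ∧ (d^n) y ≤ y := by
  intro n; induction n with
  | zero =>
    rw [pow_zero]
    exact ⟨hy, le_refl y⟩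
  | succ n ih =>
    have h1 : (d^(n+1)) y = d ((d^n) y) := pow_succ_app d n y
    have h2 : d ((d^n) y) < (d^n) y := hrep.1 _ ih.1
    rw [h1]
    exact ⟨h2.trans ih.1, h2.le.trans ih.2⟩

lemma escape_above {d : H} {p : ℝ} (hrep : RepAt d p) {y : ℝ} (hy : p < y) (C : ℝ) :
    ∃ n : ℕ, C < (d^n) y := by
  by_contra hC; push_neg at hC
  set s : ℕ → ℝ := fun n => (d^n) y with hs
  have hm : Monotone s := monotone_nat_of_le_succ (fun n => by
    have h1 : s (n+1) = d (s n) := pow_succ_app d n y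
    rw [h1]
    exact (hrep.2 _ (rep_orbit hrep hy n).1).le)
  have hbdd : BddAbove (Set.range s) := ⟨C, by rintro _ ⟨n, rfl⟩; exact hC n⟩
  have ht1 : Filter.Tendsto s Filter.atTop (nhds (⨆ n, s n)) := tendsto_atTop_ciSup hm hbdd
  have ht2 : Filter.Tendsto (fun n => s (n+1)) Filter.atTop (nhds (⨆ n, s n)) :=
    ht1.comp (Filter.tendsto_add_atTop_nat 1)
  have ht3 : Filter.Tendsto (fun n => d (s n)) Filter.atTop (nhds (d (⨆ n, s n))) :=
    (d.continuous.tendsto _).comp ht1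
  have heq : (fun n => s (n+1)) = fun n => d (s n) := funext fun n => pow_succ_app d n y
  rw [heq] at ht2
  have hfix2 : d (⨆ n, s n) = ⨆ n, s n := tendsto_nhds_unique ht3 ht2
  have hgt : p < ⨆ n, s n := lt_of_lt_of_le hy (le_ciSup hbdd 0)
  exact absurd hfix2 (ne_of_gt (hrep.2 _ hgt))

lemma escape_below {d : H} {p : ℝ} (hrep : RepAt d p) {y : ℝ} (hy : y < p) (C : ℝ) :
    ∃ n : ℕ, (d^n) y < C := by
  by_contra hC; push_neg at hC
  set s : ℕ → ℝ := fun n => (d^n) y with hs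
  have hm : Antitone s := antitone_nat_of_succ_le (fun n => by
    have h1 : s (n+1) = d (s n) := pow_succ_app d n y
    rw [h1]
    exact (hrep.1 _ (rep_orbit' hrep hy n).1).le)
  have hbdd : BddBelow (Set.range s) := ⟨C, by rintro _ ⟨n, rfl⟩; exact hC n⟩
  have ht1 : Filter.Tendsto s Filter.atTop (nhds (⨅ n, s n)) := tendsto_atTop_ciInf hm hbdd
  have ht2 : Filter.Tendsto (fun n => s (n+1)) Filter.atTop (nhds (⨅ n, s n)) :=
    ht1.comp (Filter.tendsto_add_atTop_nat 1)
  have ht3 : Filter.Tendsto (fun n => d (s n)) Filter.atTop (nhds (d (⨅ n, s n))) :=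
    (d.continuous.tendsto _).comp ht1
  have heq : (fun n => s (n+1)) = fun n => d (s n) := funext fun n => pow_succ_app d n y
  rw [heq] at ht2
  have hfix2 : d (⨅ n, s n) = ⨅ n, s n := tendsto_nhds_unique ht3 ht2
  have hlt : ⨅ n, s n < p := lt_of_le_of_lt (ciInf_le hbdd 0) hy
  exact absurd hfix2 (ne_of_lt (hrep.1 _ hlt))


lemma total (hmono : ∀ g ∈ G, StrictMono (g : ℝ → ℝ))
    (HB : ∀ f ∈ G, f ≠ 1 → ∃ p, RepAt f p ∨ AttAt f p)
    {a b : H} (ha : a ∈ G) (hb : b ∈ G) : a = b ∨ LTE a b ∨ LTE b a := by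
  by_cases hab : a = b
  · exact Or.inl hab
  have hwm : b⁻¹ * a ∈ G := mul_mem (inv_mem hb) ha
  have hwne : b⁻¹ * a ≠ 1 := by
    intro h1
    exact hab (inv_mul_eq_one.mp h1).symm
  rcases HB _ hwm hwne with ⟨p, hrep | hatt⟩
  · refine Or.inr (Or.inr ⟨p, fun t ht => ?_⟩)
    have h1 : t < (b⁻¹:H) (a t) := hrep.2 t ht
    have h2 := (hmono b hb) h1
    rwa [app_inv] at h2
  · refine Or.inr (Or.inl ⟨p, fun t ht => ?_⟩)
    have h1 : (b⁻¹:H) (a t) < t := hatt.2 t ht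
    have h2 := (hmono b hb) h1
    rwa [app_inv] at h2

lemma rep_of_pos (HB : ∀ f ∈ G, f ≠ 1 → ∃ p, RepAt f p ∨ AttAt f p)
    {d : H} (hd : d ∈ G) (hpos : LTE 1 d) : ∃ p, RepAt d p := by
  have hdne : d ≠ 1 := by
    rintro rfl
    exact lte_irrefl hpos
  rcases HB d hd hdne with ⟨p, hrep | hatt⟩
  · exact ⟨p, hrep⟩
  · exfalso
    obtain ⟨c, hc⟩ := hpos
    have h1 : max c p + 1 < d (max c p + 1) := hc (max c p + 1) (by have := le_max_left c p; linarith)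
    have h2 : d (max c p + 1) < max c p + 1 := hatt.2 (max c p + 1) (by have := le_max_right c p; linarith)
    exact lt_asymm h1 h2

lemma rep_of_att (hmono : ∀ g ∈ G, StrictMono (g : ℝ → ℝ)) {f : H} (hf : f ∈ G) {p : ℝ}
    (hatt : AttAt f p) : RepAt (f⁻¹) p := by
  constructor
  · intro x hx
    have h1 : x < f x := hatt.1 x hx
    have h2 := (hmono _ (inv_mem hf)) h1
    rwa [inv_app_self] at h2
  · intro x hx
    have h1 : f x < x := hatt.2 x hx
    have h2 := (hmono _ (inv_mem hf)) h1
    rwa [inv_app_self] at h2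

lemma arch (hmono : ∀ g ∈ G, StrictMono (g : ℝ → ℝ))
    (HB : ∀ f ∈ G, f ≠ 1 → ∃ p, RepAt f p ∨ AttAt f p)
    {d v : H} (hd : d ∈ G) (hv : v ∈ G) {p : ℝ} (hrep : RepAt d p) :
    ∃ k : ℕ, LEE v (d^k) := by
  by_contra hC; push_neg at hC
  have H1 : ∀ k : ℕ, LTE (d^k) v := by
    intro k
    rcases total hmono HB hv (pow_mem hd k) with he | hl | hr
    · exact absurd (Or.inl he) (hC k)
    · exact absurd (Or.inr hl) (hC k)
    · exact hr
  obtain ⟨k₁, hk₁⟩ := escape_above hrep (lt_add_one p) (v (p+1))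
  obtain ⟨k₀, hk₀⟩ := escape_below hrep (sub_one_lt p) (v (p-1))
  set k := k₀ + k₁ with hk
  have e1 : v (p+1) < (d^k) (p+1) := by
    have hb : p < (d^k₁) (p+1) := (rep_orbit hrep (lt_add_one p) k₁).1
    have h2 : (d^k₁) (p+1) ≤ (d^k₀) ((d^k₁) (p+1)) := (rep_orbit hrep hb k₀).2
    have h3 : (d^k) (p+1) = (d^k₀) ((d^k₁) (p+1)) := pow_add_app d k₀ k₁ (p+1)
    rw [h3]
    exact lt_of_lt_of_le hk₁ h2
  have e0 : (d^k) (p-1) < v (p-1) := by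
    have hb : (d^k₀) (p-1) < p := (rep_orbit' hrep (sub_one_lt p) k₀).1
    have h2 : (d^k₁) ((d^k₀) (p-1)) ≤ (d^k₀) (p-1) := (rep_orbit' hrep hb k₁).2
    have h3 : (d^k) (p-1) = (d^k₁) ((d^k₀) (p-1)) := by
      rw [hk, add_comm k₀ k₁]
      exact pow_add_app d k₁ k₀ (p-1)
    rw [h3]
    exact lt_of_le_of_lt h2 hk₀
  have hwm : (v⁻¹ * d^k) ∈ G := mul_mem (inv_mem hv) (pow_mem hd k)
  have hwne : v⁻¹ * d^k ≠ 1 := by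
    intro h1
    have h2 : v = d^k := inv_mul_eq_one.mp h1
    have := H1 k
    rw [← h2] at this
    exact lte_irrefl this
  rcases HB _ hwm hwne with ⟨ρ, hrep2 | hatt2⟩
  · obtain ⟨c, hc⟩ := H1 k
    set t := max c ρ + 1 with ht
    have h1 : (d^k) t < v t := hc t (by have := le_max_left c ρ; linarith)
    have h2 : t < (v⁻¹:H) ((d^k) t) := hrep2.2 t (by have := le_max_right c ρ; linarith)
    have h3 := (hmono v hv) h2
    rw [app_inv] at h3
    exact lt_asymm h1 h3
  · have hle : p + 1 ≤ ρ := by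
      by_contra hgt; push_neg at hgt
      have h2 : (v⁻¹:H) ((d^k) (p+1)) < p+1 := hatt2.2 _ hgt
      have h3 := (hmono v hv) h2
      rw [app_inv] at h3
      exact lt_asymm e1 h3
    have h4 : p - 1 < ρ := by linarith
    have h5 : p - 1 < (v⁻¹:H) ((d^k) (p-1)) := hatt2.1 _ h4
    have h6 := (hmono v hv) h5
    rw [app_inv] at h6
    exact lt_asymm e0 h6


lemma exists_M (hmono : ∀ g ∈ G, StrictMono (g : ℝ → ℝ))
    (HB : ∀ f ∈ G, f ≠ 1 → ∃ p, RepAt f p ∨ AttAt f p)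
    {u : H} (hu : u ∈ G) {pu : ℝ} (hurep : RepAt u pu) {w : H} (hw : w ∈ G) :
    ∃ m : ℤ, LEE (u^m) w ∧ LTE w (u^(m+1)) := by
  classical
  have hupos : LTE 1 u := ⟨pu, fun t ht => hurep.2 t ht⟩
  obtain ⟨k₁, hk₁⟩ := arch hmono HB hu (inv_mem hw) hurep
  obtain ⟨k₂, hk₂⟩ := arch hmono HB hu hw hurep
  have hlow : LEE (u^(-(k₁:ℤ))) w := by
    have h1 := lee_inv hmono (inv_mem hw) (pow_mem hu k₁) hk₁
    rw [inv_inv] at h1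
    have h2 : ((u^k₁ : H))⁻¹ = u^(-(k₁:ℤ)) := by
      rw [← zpow_natCast, ← zpow_neg]
    rwa [h2] at h1
  have Hbdd : ∃ b : ℤ, ∀ m : ℤ, LEE (u^m) w → m ≤ b := by
    refine ⟨(k₂:ℤ), fun m hm => ?_⟩
    have hk₂' : LEE w (u^((k₂:ℕ):ℤ)) := by rwa [zpow_natCast]
    have h2 : LTE w (u^((k₂:ℤ)+1)) :=
      lee_lte hk₂' (zpow_lt hmono hu hupos (lt_add_one _))
    have := M_lt hmono hu hupos hm h2
    omega
  obtain ⟨m, hm, hmax⟩ := Int.exists_greatest_of_bdd Hbdd ⟨-(k₁:ℤ), hlow⟩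
  refine ⟨m, hm, ?_⟩
  rcases total hmono HB (zpow_mem hu (m+1)) hw with he | hl | hr
  · have := hmax (m+1) (Or.inl he)
    omega
  · have := hmax (m+1) (Or.inr hl)
    omega
  · exact hr

lemma no_lt (hmono : ∀ g ∈ G, StrictMono (g : ℝ → ℝ))
    (HB : ∀ f ∈ G, f ≠ 1 → ∃ p, RepAt f p ∨ AttAt f p)
    {u : H} (hu : u ∈ G) {pu : ℝ} (hurep : RepAt u pu)
    {g h : H} (hg : g ∈ G) (hh : h ∈ G) (hlt : LTE (g*h) (h*g)) : False := by
  classical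
  have hupos : LTE 1 u := ⟨pu, fun t ht => hurep.2 t ht⟩
  have hxm : g * h ∈ G := mul_mem hg hh
  have hzm : h * g ∈ G := mul_mem hh hg
  have hdm : (g*h)⁻¹ * (h*g) ∈ G := mul_mem (inv_mem hxm) hzm
  have hd1 : LTE 1 ((g*h)⁻¹ * (h*g)) := by
    have h1 := lte_mul_left hmono (inv_mem hxm) hlt
    rwa [inv_mul_cancel] at h1
  obtain ⟨ρ, hρ⟩ := rep_of_pos HB hdm hd1
  obtain ⟨k, hk⟩ := arch hmono HB hdm (mul_mem hu hu) hρ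
  -- M values at exponent k
  obtain ⟨mx, hmx1, hmx2⟩ := exists_M hmono HB hu hurep (pow_mem hxm k)
  obtain ⟨mz, hmz1, hmz2⟩ := exists_M hmono HB hu hurep (pow_mem hzm k)
  obtain ⟨md, hmd1, hmd2⟩ := exists_M hmono HB hu hurep (pow_mem hdm k)
  obtain ⟨mg, hmg1, hmg2⟩ := exists_M hmono HB hu hurep (pow_mem hg k)
  obtain ⟨mh, hmh1, hmh2⟩ := exists_M hmono HB hu hurep (pow_mem hh k)
  have hlee : LEE (g*h) (h*g) := Or.inr hlt
  -- (i)  mg + mh ≤ mx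
  have e1 : LEE (u^(mg+mh)) ((g*h)^k) :=
    lee_trans (M_lower hmono hu (pow_mem hh k) hmg1 hmh1) (sand_a hmono hg hh hlee k)
  have i1 : mg + mh < mx + 1 := M_lt hmono hu hupos e1 hmx2
  -- (ii) mz < (mh+1)+(mg+1)
  have e2 : LTE ((h*g)^k) (u^((mh+1)+(mg+1))) :=
    lee_lte (sand_d hmono hg hh hlee k) (M_upper hmono hu (pow_mem hh k) hmh2 hmg2)
  have i2 : mz < (mh+1)+(mg+1) := M_lt hmono hu hupos hmz1 e2
  -- (iii) mx + md ≤ mz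
  have hxdz : (g*h) * ((g*h)⁻¹ * (h*g)) = h*g := by group
  have e3 : LEE (u^(mx+md)) ((h*g)^k) := by
    rcases total hmono HB (mul_mem hxm hdm) (mul_mem hdm hxm) with he | hl | hr
    · have s1 := sand_a hmono hxm hdm (Or.inl he) k
      rw [hxdz] at s1
      exact lee_trans (M_lower hmono hu (pow_mem hdm k) hmx1 hmd1) s1
    · have s1 := sand_a hmono hxm hdm (Or.inr hl) k
      rw [hxdz] at s1
      exact lee_trans (M_lower hmono hu (pow_mem hdm k) hmx1 hmd1) s1
    · have s1 := sand_c hmono hdm hxm (Or.inr hr) k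
      rw [hxdz] at s1
      have := lee_trans (M_lower hmono hu (pow_mem hxm k) hmd1 hmx1) s1
      rwa [add_comm md mx] at this
  have i3 : mx + md < mz + 1 := M_lt hmono hu hupos e3 hmz2
  -- (iv) 2 ≤ md
  have e4 : LEE (u^(2:ℤ)) (((g*h)⁻¹ * (h*g))^k) := by
    have h2 : (u^(2:ℤ) : H) = u*u := by
      rw [show (2:ℤ) = 1+1 by norm_num, zpow_add, zpow_one]
    rwa [h2]
  have i4 : (2:ℤ) < md + 1 := M_lt hmono hu hupos e4 hmd2
  omega

lemma comm_of_caseB (hmono : ∀ g ∈ G, StrictMono (g : ℝ → ℝ))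
    (HB : ∀ f ∈ G, f ≠ 1 → ∃ p, RepAt f p ∨ AttAt f p)
    {u : H} (hu : u ∈ G) {pu : ℝ} (hurep : RepAt u pu)
    {g h : H} (hg : g ∈ G) (hh : h ∈ G) : g * h = h * g := by
  rcases total hmono HB (mul_mem hg hh) (mul_mem hh hg) with he | hl | hr
  · exact he
  · exact (no_lt hmono HB hu hurep hg hh hl).elim
  · exact (no_lt hmono HB hu hurep hh hg hr).elim


lemma fix_between {f : H} {c e : ℝ} (hce : c ≤ e) (h1 : f c ≤ c) (h2 : e ≤ f e) :
    ∃ z, z ∈ Set.Icc c e ∧ f z = z := by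
  have hcont : ContinuousOn (fun t => f t - t) (Set.Icc c e) :=
    (f.continuous.sub continuous_id).continuousOn
  have h0 : (0:ℝ) ∈ Set.Icc (f c - c) (f e - e) := Set.mem_Icc.mpr ⟨by linarith, by linarith⟩
  obtain ⟨z, hz1, hz2⟩ := intermediate_value_Icc hce hcont h0
  exact ⟨z, hz1, by have : f z - z = 0 := hz2; linarith⟩

lemma fix_between' {f : H} {c e : ℝ} (hce : c ≤ e) (h1 : c ≤ f c) (h2 : f e ≤ e) :
    ∃ z, z ∈ Set.Icc c e ∧ f z = z := by
  have hcont : ContinuousOn (fun t => f t - t) (Set.Icc c e) :=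
    (f.continuous.sub continuous_id).continuousOn
  have h0 : (0:ℝ) ∈ Set.Icc (f e - e) (f c - c) := Set.mem_Icc.mpr ⟨by linarith, by linarith⟩
  obtain ⟨z, hz1, hz2⟩ := intermediate_value_Icc' hce hcont h0
  exact ⟨z, hz1, by have : f z - z = 0 := hz2; linarith⟩

lemma right_dichotomy {f : H} {p : ℝ} (hu : ∀ y, f y = y → y = p) :
    (∀ x, p < x → x < f x) ∨ (∀ x, p < x → f x < x) := by
  rcases lt_trichotomy (f (p+1)) (p+1) with h | h | h
  · right; intro x hx
    rcases lt_trichotomy (f x) x with h2 | h2 | h2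
    · exact h2
    · exact absurd (hu x h2) (by linarith)
    · exfalso
      rcases le_total x (p+1) with hle | hle
      · obtain ⟨z, hz1, hz2⟩ := fix_between' hle h2.le h.le
        have := hu z hz2
        have := hz1.1
        linarith
      · obtain ⟨z, hz1, hz2⟩ := fix_between hle h.le h2.le
        have := hu z hz2
        have := hz1.1
        linarith
  · exact absurd (hu _ h) (by linarith)
  · left; intro x hx
    rcases lt_trichotomy (f x) x with h2 | h2 | h2
    · exfalso
      rcases le_total x (p+1) with hle | hle
      · obtain ⟨z, hz1, hz2⟩ := fix_between hle h2.le h.le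
        have := hu z hz2
        have := hz1.1
        linarith
      · obtain ⟨z, hz1, hz2⟩ := fix_between' hle h.le h2.le
        have := hu z hz2
        have := hz1.1
        linarith
    · exact absurd (hu x h2) (by linarith)
    · exact h2

lemma left_dichotomy {f : H} {p : ℝ} (hu : ∀ y, f y = y → y = p) :
    (∀ x, x < p → x < f x) ∨ (∀ x, x < p → f x < x) := by
  rcases lt_trichotomy (f (p-1)) (p-1) with h | h | h
  · right; intro x hx
    rcases lt_trichotomy (f x) x with h2 | h2 | h2
    · exact h2
    · exact absurd (hu x h2) (by linarith)
    · exfalso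
      rcases le_total x (p-1) with hle | hle
      · obtain ⟨z, hz1, hz2⟩ := fix_between' hle h2.le h.le
        have := hu z hz2
        have := hz1.2
        linarith
      · obtain ⟨z, hz1, hz2⟩ := fix_between hle h.le h2.le
        have := hu z hz2
        have := hz1.2
        linarith
  · exact absurd (hu _ h) (by linarith)
  · left; intro x hx
    rcases lt_trichotomy (f x) x with h2 | h2 | h2
    · exfalso
      rcases le_total x (p-1) with hle | hle
      · obtain ⟨z, hz1, hz2⟩ := fix_between hle h2.le h.le
        have := hu z hz2
        have := hz1.2
        linarith
      · obtain ⟨z, hz1, hz2⟩ := fix_between' hle h.le h2.le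
        have := hu z hz2
        have := hz1.2
        linarith
    · exact absurd (hu x h2) (by linarith)
    · exact h2

lemma classify {f : H} {p : ℝ} (hu : ∀ y, f y = y → y = p) :
    (∀ x, x ≠ p → x < f x) ∨ (∀ x, x ≠ p → f x < x) ∨ RepAt f p ∨ AttAt f p := by
  rcases left_dichotomy hu with hL | hL <;> rcases right_dichotomy hu with hR | hR
  · left; intro x hx
    rcases lt_or_gt_of_ne hx with hc | hc
    · exact hL x hc
    · exact hR x hc
  · right; right; right; exact ⟨hL, hR⟩
  · right; right; left; exact ⟨hL, hR⟩
  · right; left; intro x hx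
    rcases lt_or_gt_of_ne hx with hc | hc
    · exact hL x hc
    · exact hR x hc

lemma parabolic_global (hmono : ∀ g ∈ G, StrictMono (g : ℝ → ℝ))
    (hfix : ∀ g ∈ G, g ≠ 1 → ∃! x : ℝ, g x = x)
    {f : H} (hf : f ∈ G) {p : ℝ} (hp : f p = p)
    (hup : ∀ x, x ≠ p → x < f x) : ∀ h ∈ G, h p = p := by
  intro h hh
  by_contra hnp
  have hvm : h * f * h⁻¹ ∈ G := mul_mem (mul_mem hh hf) (inv_mem hh)
  have hvup : ∀ x, x ≠ h p → x < (h * f * h⁻¹) x := by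
    intro x hx
    have h1 : (h⁻¹:H) x ≠ p := by
      intro he
      apply hx
      have := congrArg h he
      rwa [app_inv] at this
    have h2 := hup _ h1
    have h3 := (hmono h hh) h2
    rwa [app_inv] at h3
  have hwm : f * (h * f * h⁻¹) ∈ G := mul_mem hf hvm
  have hwall : ∀ x, x < (f * (h * f * h⁻¹)) x := by
    intro x
    by_cases hx : x = h p
    · subst hx
      have h1 : (h*f*h⁻¹) (h p) = h p := by
        show h (f ((h⁻¹:H) (h p))) = h p
        rw [inv_app_self, hp]
      show h p < f ((h*f*h⁻¹) (h p))
      rw [h1]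
      exact hup _ hnp
    · have h1 : x < (h*f*h⁻¹) x := hvup x hx
      by_cases h2 : (h*f*h⁻¹) x = p
      · show x < f ((h*f*h⁻¹) x)
        rw [h2, hp, ← h2]
        exact h1
      · exact h1.trans (hup _ h2)
  have hwne : f * (h * f * h⁻¹) ≠ 1 := by
    intro h1
    have h2 := hwall 0
    rw [h1] at h2
    exact lt_irrefl _ h2
  obtain ⟨z, hz, -⟩ := hfix _ hwm hwne
  have h3 := hwall z
  rw [hz] at h3
  exact lt_irrefl _ h3


end SolodovAux

open SolodovAux in
/-- Solodov-type statement: a group of orientation-preserving homeomorphisms of `ℝ`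
in which every nontrivial element has exactly one fixed point has a global fixed
point. -/
theorem solodov_common_fixed_point
    (G : Subgroup (ℝ ≃ₜ ℝ))
    (hmono : ∀ g ∈ G, StrictMono (g : ℝ → ℝ))
    (hfix : ∀ g ∈ G, g ≠ 1 → ∃! x : ℝ, g x = x) :
    ∃ x₀ : ℝ, ∀ g ∈ G, g x₀ = x₀ := by
  classical
  by_cases hG : ∀ g ∈ G, g = (1 : ℝ ≃ₜ ℝ)
  · exact ⟨0, fun g hg => by rw [hG g hg]; rfl⟩
  push_neg at hG
  obtain ⟨g₀, hg₀, hg₀ne⟩ := hG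
  obtain ⟨a₀, ha₀fix, ha₀uniq⟩ := hfix g₀ hg₀ hg₀ne
  by_cases hpar : ∃ f, f ∈ G ∧ ∃ p : ℝ, f p = p ∧ ∀ x, x ≠ p → x < f x
  · obtain ⟨f, hf, p, hp, hup⟩ := hpar
    exact ⟨p, fun h hh => parabolic_global hmono hfix hf hp hup h hh⟩
  -- Case B : every nontrivial element is hyperbolic (repelling or attracting)
  have HB : ∀ f ∈ G, f ≠ 1 → ∃ p, RepAt f p ∨ AttAt f p := by
    intro f hf hne
    obtain ⟨p, hp, huniq⟩ := hfix f hf hne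
    rcases classify (f := f) (p := p) huniq with h1 | h2 | h3 | h4
    · exact absurd ⟨f, hf, p, hp, h1⟩ hpar
    · refine absurd ⟨f⁻¹, inv_mem hf, p, ?_, ?_⟩ hpar
      · show f.symm p = p
        nth_rewrite 1 [← hp]
        rw [f.symm_apply_apply]
      · intro x hx
        have hy : f ((f⁻¹:H) x) = x := app_inv f x
        have h5 : (f⁻¹:H) x ≠ p := by
          intro he
          apply hx
          rw [← hy, he, hp]
        have h6 := h2 _ h5
        rwa [hy] at h6
    · exact ⟨p, Or.inl h3⟩
    · exact ⟨p, Or.inr h4⟩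
  -- a repelling reference element
  obtain ⟨u, hu, pu, hurep⟩ : ∃ u, u ∈ G ∧ ∃ pu, RepAt u pu := by
    rcases HB g₀ hg₀ hg₀ne with ⟨p, hrep | hatt⟩
    · exact ⟨g₀, hg₀, p, hrep⟩
    · exact ⟨g₀⁻¹, inv_mem hg₀, p, rep_of_att hmono hg₀ hatt⟩
  refine ⟨a₀, fun h hh => ?_⟩
  have hcomm : g₀ * h = h * g₀ := comm_of_caseB hmono HB hu hurep hg₀ hh
  have h1 : g₀ (h a₀) = h a₀ := by
    have h2 : (g₀ * h) a₀ = (h * g₀) a₀ := by rw [hcomm]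
    calc g₀ (h a₀) = (g₀ * h) a₀ := rfl
      _ = (h * g₀) a₀ := h2
      _ = h (g₀ a₀) := rfl
      _ = h a₀ := by rw [ha₀fix]
  exact ha₀uniq _ h1
end

section
/- Let G be a group of orientation-preserving homeomorphisms of ℝ such that every element of G other than the identity has exactly one fixed point. Then G is abelian. -/
section Holder
variable {H : Type*} [Group H]

theorem holder_comm (S : Set H)
    (h1 : (1:H) ∉ S)
    (hmul : ∀ a ∈ S, ∀ b ∈ S, a * b ∈ S)
    (hconj : ∀ a ∈ S, ∀ g : H, g * a * g⁻¹ ∈ S)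
    (htri : ∀ a : H, a ≠ 1 → a ∈ S ∨ a⁻¹ ∈ S)
    (harch : ∀ a ∈ S, ∀ b ∈ S, ∃ m : ℤ, a ^ m * b⁻¹ ∈ S ∪ {1}) :
    ∀ a b : H, a * b = b * a := by
  classical
  have hTmul : ∀ a ∈ S ∪ {1}, ∀ b ∈ S ∪ {1}, a * b ∈ S ∪ {1} := by
    rintro a (ha | rfl) b (hb | rfl)
    · exact Or.inl (hmul _ ha _ hb)
    · simp only [mul_one]; exact Or.inl ha
    · simp only [one_mul]; exact Or.inl hb
    · simp
  have hTconj : ∀ a ∈ S ∪ {1}, ∀ g : H, g * a * g⁻¹ ∈ S ∪ {1} := by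
    rintro a (ha | rfl) g
    · exact Or.inl (hconj _ ha g)
    · simp
  have hTSmul : ∀ a ∈ S ∪ {1}, ∀ b ∈ S, a * b ∈ S := by
    rintro a (ha | rfl) b hb
    · exact hmul _ ha _ hb
    · simpa using hb
  have hSTmul : ∀ a ∈ S, ∀ b ∈ S ∪ {1}, a * b ∈ S := by
    rintro a ha b (hb | rfl)
    · exact hmul _ ha _ hb
    · simpa using ha
  have hpow : ∀ a ∈ S, ∀ n : ℕ, a ^ (n+1) ∈ S := by
    intro a ha n
    induction n with
    | zero => simpa using ha
    | succ k ih => rw [pow_succ]; exact hmul _ ih _ ha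
  have hzpow : ∀ a ∈ S, ∀ m : ℤ, 1 ≤ m → a ^ m ∈ S := by
    intro a ha m hm
    obtain ⟨n, hn⟩ : ∃ n : ℕ, m = (n:ℤ) + 1 := ⟨(m-1).toNat, by omega⟩
    rw [hn]
    have e : a ^ ((n:ℤ)+1) = a ^ (n+1) := by
      rw [← zpow_natCast]; push_cast; ring_nf
    rw [e]; exact hpow _ ha n
  -- bracketing by powers of a positive element
  have bracket : ∀ ε ∈ S, ∀ a : H,
      ∃ m : ℤ, a * (ε^m)⁻¹ ∈ S ∪ {1} ∧ ε^(m+1) * a⁻¹ ∈ S := by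
    intro ε hε a
    have hne : ∃ k : ℤ, a * (ε^k)⁻¹ ∈ S ∪ {1} := by
      rcases eq_or_ne a 1 with rfl | ha
      · refine ⟨-1, Or.inl ?_⟩
        simpa using hε
      · rcases htri a ha with haS | haS
        · exact ⟨0, by simp only [zpow_zero, inv_one, mul_one]; exact Or.inl haS⟩
        · obtain ⟨m, hm⟩ := harch ε hε a⁻¹ haS
          refine ⟨-m, ?_⟩
          have := hTconj _ hm a
          have e : a * (ε ^ m * a⁻¹⁻¹) * a⁻¹ = a * (ε^(-m))⁻¹ := by group
          rwa [e] at this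
    have hbd : ∃ N : ℤ, ε^N * a⁻¹ ∈ S := by
      rcases eq_or_ne a 1 with rfl | ha
      · exact ⟨1, by simpa using hε⟩
      · rcases htri a ha with haS | haS
        · obtain ⟨m, hm⟩ := harch ε hε a haS
          refine ⟨m+1, ?_⟩
          have := hSTmul _ hε _ hm
          have e : ε * (ε ^ m * a⁻¹) = ε^(m+1) * a⁻¹ := by group
          rwa [e] at this
        · exact ⟨1, by simpa using hmul _ hε _ haS⟩
    obtain ⟨N, hN⟩ := hbd
    have hub : ∀ k : ℤ, a * (ε^k)⁻¹ ∈ S ∪ {1} → k ≤ N - 1 := by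
      intro k hk
      have h2 : ε^(N-k) ∈ S := by
        have := hSTmul _ hN _ hk
        have e : ε ^ N * a⁻¹ * (a * (ε^k)⁻¹) = ε^(N-k) := by group
        rwa [e] at this
      by_contra hc
      push_neg at hc
      rcases eq_or_lt_of_le (show N - k ≤ 0 by omega) with heq | hlt
      · rw [heq] at h2
        simp at h2; exact h1 h2
      · have h3 : ε^(k-N) ∈ S := hzpow _ hε _ (by omega)
        have h4 : ε^(N-k) * ε^(k-N) ∈ S := hmul _ h2 _ h3
        have e : ε^(N-k) * ε^(k-N) = 1 := by
          rw [← zpow_add]; ring_nf; exact zpow_zero ε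
        rw [e] at h4; exact h1 h4
    obtain ⟨m, hm, hmax⟩ := Int.exists_greatest_of_bdd ⟨N-1, hub⟩ hne
    refine ⟨m, hm, ?_⟩
    have hnot : a * (ε^(m+1))⁻¹ ∉ S ∪ {1} := fun hmem => by
      have := hmax _ hmem; omega
    have hne1 : a * (ε^(m+1))⁻¹ ≠ 1 := fun h => hnot (Or.inr h)
    rcases htri _ hne1 with h | h
    · exact absurd (Or.inl h) hnot
    · have e : (a * (ε^(m+1))⁻¹)⁻¹ = ε^(m+1) * a⁻¹ := by group
      rwa [e] at h
  -- no positive commutators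
  have key : ∀ a b : H, a * b * a⁻¹ * b⁻¹ ∈ S → False := by
    intro a b hc
    set c := a * b * a⁻¹ * b⁻¹ with hcdef
    have hεex : ∃ ε ∈ S, c * (ε*ε)⁻¹ ∈ S ∪ {1} := by
      by_cases hδ : ∃ δ ∈ S, c * δ⁻¹ ∈ S
      · obtain ⟨δ, hδS, hδlt⟩ := hδ
        by_cases h2 : c * (δ*δ)⁻¹ ∈ S ∪ {1}
        · exact ⟨δ, hδS, h2⟩
        · have hne1 : c * (δ*δ)⁻¹ ≠ 1 := fun h => h2 (Or.inr h)
          rcases htri _ hne1 with h | h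
          · exact absurd (Or.inl h) h2
          · refine ⟨c * δ⁻¹, hδlt, Or.inl ?_⟩
            have := hconj _ h (c * δ⁻¹)
            have e : c * δ⁻¹ * (c * (δ*δ)⁻¹)⁻¹ * (c * δ⁻¹)⁻¹
                = c * ((c*δ⁻¹) * (c*δ⁻¹))⁻¹ := by group
            rwa [e] at this
      · push_neg at hδ
        obtain ⟨ma, hma, hma'⟩ := bracket c hc a
        obtain ⟨mb, hmb, hmb'⟩ := bracket c hc b
        have hpw : ∀ x : H, ∀ k : ℤ, x * (c^k)⁻¹ ∈ S ∪ {1} → c^(k+1) * x⁻¹ ∈ S → x = c^k := by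
          intro x k hk hk'
          rcases hk with h | h
          · exfalso
            refine hδ _ h ?_
            have e : c * (x * (c^k)⁻¹)⁻¹ = c^(k+1) * x⁻¹ := by group
            rwa [e]
          · exact mul_inv_eq_one.mp h
        have ha : a = c^ma := hpw a ma hma hma'
        have hb : b = c^mb := hpw b mb hmb hmb'
        exfalso
        have : c = 1 := by
          rw [hcdef, ha, hb]; group
        rw [this] at hc; exact h1 hc
    obtain ⟨ε, hεS, hcε⟩ := hεex
    obtain ⟨ma, hma, hma'⟩ := bracket ε hεS a
    obtain ⟨mb, hmb, hmb'⟩ := bracket ε hεS b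
    have hlow : (b*a) * (ε^(ma+mb))⁻¹ ∈ S ∪ {1} := by
      have h' := hTmul _ hmb _ (hTconj _ hma (ε^mb))
      have e : b * (ε^mb)⁻¹ * (ε^mb * (a * (ε^ma)⁻¹) * (ε^mb)⁻¹)
          = (b*a) * (ε^(ma+mb))⁻¹ := by group
      rwa [e] at h'
    have hup : ε^(ma+mb+2) * (a*b)⁻¹ ∈ S := by
      have h' := hmul _ (hconj _ hmb' (ε^(ma+1))) _ hma'
      have e : ε^(ma+1) * (ε^(mb+1) * b⁻¹) * (ε^(ma+1))⁻¹ * (ε^(ma+1) * a⁻¹)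
          = ε^(ma+mb+2) * (a*b)⁻¹ := by group
      rwa [e] at h'
    have hD : (ε*ε) * c⁻¹ ∈ S := by
      have h' := hTSmul _ (hTconj _ hlow (ε*ε)) _ hup
      have e : ε*ε * ((b*a) * (ε^(ma+mb))⁻¹) * (ε*ε)⁻¹ * (ε^(ma+mb+2) * (a*b)⁻¹)
          = (ε*ε) * c⁻¹ := by rw [hcdef]; group
      rwa [e] at h'
    rcases hcε with h | h
    · have h4 : (c * (ε*ε)⁻¹) * ((ε*ε) * c⁻¹) ∈ S := hmul _ h _ hD
      have e : (c * (ε*ε)⁻¹) * ((ε*ε) * c⁻¹) = 1 := by group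
      rw [e] at h4; exact h1 h4
    · have hce : c = ε*ε := mul_inv_eq_one.mp h
      rw [hce] at hD
      have e : ε*ε * (ε*ε)⁻¹ = 1 := by group
      rw [e] at hD; exact h1 hD
  intro a b
  by_contra hab
  have hc1 : a * b * a⁻¹ * b⁻¹ ≠ 1 := by
    intro h
    apply hab
    have : (a*b) * (b*a)⁻¹ = 1 := by rw [← h]; group
    exact mul_inv_eq_one.mp this
  rcases htri _ hc1 with h | h
  · exact key a b h
  · apply key b a
    have e : (a * b * a⁻¹ * b⁻¹)⁻¹ = b * a * b⁻¹ * a⁻¹ := by group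
    rwa [e] at h
end Holder


section Analytic

private lemma sign_right (f : ℝ → ℝ) (hf : Continuous f) (p : ℝ)
    (hu : ∀ x, f x = x → x = p) :
    (∀ x, p < x → x < f x) ∨ (∀ x, p < x → f x < x) := by
  by_contra hcon
  push_neg at hcon
  obtain ⟨⟨x₁, hx₁p, hx₁⟩, ⟨x₂, hx₂p, hx₂⟩⟩ := hcon
  have h1 : f x₁ < x₁ := lt_of_le_of_ne hx₁ (fun h => absurd (hu _ h) (ne_of_gt hx₁p))
  have h2 : x₂ < f x₂ := lt_of_le_of_ne hx₂ (fun h => absurd (hu _ h.symm) (ne_of_gt hx₂p))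
  have hcont : ContinuousOn (fun x => f x - x) (Set.uIcc x₁ x₂) :=
    (hf.sub continuous_id).continuousOn
  have h0 : (0:ℝ) ∈ Set.uIcc ((fun x => f x - x) x₁) ((fun x => f x - x) x₂) := by
    rw [Set.mem_uIcc]
    left
    constructor <;> simp <;> linarith
  obtain ⟨z, hz, hz0⟩ := intermediate_value_uIcc hcont h0
  have hfz : f z = z := by
    have : f z - z = 0 := hz0
    linarith
  have hzp : z = p := hu _ hfz
  rw [Set.mem_uIcc] at hz
  rcases hz with ⟨hl, _⟩ | ⟨hl, _⟩ <;> rw [hzp] at hl <;> linarith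

private lemma sign_left (f : ℝ → ℝ) (hf : Continuous f) (p : ℝ)
    (hu : ∀ x, f x = x → x = p) :
    (∀ x, x < p → x < f x) ∨ (∀ x, x < p → f x < x) := by
  by_contra hcon
  push_neg at hcon
  obtain ⟨⟨x₁, hx₁p, hx₁⟩, ⟨x₂, hx₂p, hx₂⟩⟩ := hcon
  have h1 : f x₁ < x₁ := lt_of_le_of_ne hx₁ (fun h => absurd (hu _ h) (ne_of_lt hx₁p))
  have h2 : x₂ < f x₂ := lt_of_le_of_ne hx₂ (fun h => absurd (hu _ h.symm) (ne_of_lt hx₂p))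
  have hcont : ContinuousOn (fun x => f x - x) (Set.uIcc x₁ x₂) :=
    (hf.sub continuous_id).continuousOn
  have h0 : (0:ℝ) ∈ Set.uIcc ((fun x => f x - x) x₁) ((fun x => f x - x) x₂) := by
    rw [Set.mem_uIcc]
    left
    constructor <;> simp <;> linarith
  obtain ⟨z, hz, hz0⟩ := intermediate_value_uIcc hcont h0
  have hfz : f z = z := by
    have : f z - z = 0 := hz0
    linarith
  have hzp : z = p := hu _ hfz
  rw [Set.mem_uIcc] at hz
  rcases hz with ⟨_, hr⟩ | ⟨_, hr⟩ <;> rw [hzp] at hr <;> linarith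

private lemma iter_chain (f : ℝ → ℝ) (p : ℝ) (hgt : ∀ x, p < x → x < f x)
    (y : ℝ) (hy : p < y) : ∀ n, p < f^[n] y ∧ f^[n] y < f^[n+1] y := by
  intro n
  induction n with
  | zero =>
    refine ⟨hy, ?_⟩
    simpa using hgt y hy
  | succ k ih =>
    have h1 : p < f^[k+1] y := lt_trans ih.1 ih.2
    refine ⟨h1, ?_⟩
    rw [Function.iterate_succ_apply' f (k+1) y]
    exact hgt _ h1

private lemma iter_mono (f : ℝ → ℝ) (p : ℝ) (hgt : ∀ x, p < x → x < f x)
    (y : ℝ) (hy : p < y) : Monotone (fun n => f^[n] y) :=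
  monotone_nat_of_le_succ (fun n => (iter_chain f p hgt y hy n).2.le)

private lemma iter_unbounded (f : ℝ → ℝ) (hf : Continuous f) (p : ℝ)
    (hgt : ∀ x, p < x → x < f x) (y : ℝ) (hy : p < y) (C : ℝ) :
    ∃ n, C < f^[n] y := by
  by_contra hcon
  push_neg at hcon
  set a : ℕ → ℝ := fun n => f^[n] y with ha
  have hmono : Monotone a := iter_mono f p hgt y hy
  have hbdd : BddAbove (Set.range a) := ⟨C, by rintro _ ⟨n, rfl⟩; exact hcon n⟩
  have hlim := tendsto_atTop_ciSup hmono hbdd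
  set L := ⨆ n, a n with hL
  have h1 : Filter.Tendsto (fun n => f (a n)) Filter.atTop (nhds (f L)) :=
    (hf.tendsto L).comp hlim
  have h2 : (fun n => f (a n)) = fun n => a (n+1) := by
    funext n
    exact (Function.iterate_succ_apply' f n y).symm
  have h3 : Filter.Tendsto (fun n => a (n+1)) Filter.atTop (nhds L) :=
    hlim.comp (Filter.tendsto_add_atTop_nat 1)
  have hfL : f L = L := tendsto_nhds_unique (h2 ▸ h1) h3
  have hpL : p < L := lt_of_lt_of_le hy (le_ciSup hbdd 0)
  exact absurd hfL (ne_of_gt (hgt L hpL))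

private lemma iter_unbounded_below (f : ℝ → ℝ) (hf : Continuous f) (p : ℝ)
    (hlt : ∀ x, x < p → f x < x) (y : ℝ) (hy : y < p) (C : ℝ) :
    ∃ n, f^[n] y < C := by
  set g : ℝ → ℝ := fun x => -f (-x) with hg
  have hgc : Continuous g := (hf.comp continuous_neg).neg
  have hggt : ∀ x, -p < x → x < g x := by
    intro x hx
    have : f (-x) < -x := hlt (-x) (by linarith)
    simp only [hg]
    linarith
  have hiter : ∀ n x, g^[n] (-x) = -(f^[n] x) := by
    intro n
    induction n with
    | zero => intro x; simp
    | succ k ih =>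
      intro x
      rw [Function.iterate_succ_apply, Function.iterate_succ_apply]
      have : g (-x) = -(f x) := by simp [hg]
      rw [this, ih]
  obtain ⟨n, hn⟩ := iter_unbounded g hgc (-p) hggt (-y) (by linarith) (-C)
  refine ⟨n, ?_⟩
  rw [hiter n y] at hn
  linarith

end Analytic

private lemma iter_chain_below (f : ℝ → ℝ) (p : ℝ) (hlt : ∀ x, x < p → f x < x)
    (y : ℝ) (hy : y < p) : ∀ n, f^[n] y < p ∧ f^[n+1] y < f^[n] y := by
  intro n
  induction n with
  | zero =>
    refine ⟨hy, ?_⟩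
    simpa using hlt y hy
  | succ k ih =>
    have h1 : f^[k+1] y < p := lt_trans ih.2 ih.1
    refine ⟨h1, ?_⟩
    rw [Function.iterate_succ_apply' f (k+1) y]
    exact hlt _ h1

private lemma iter_anti (f : ℝ → ℝ) (p : ℝ) (hlt : ∀ x, x < p → f x < x)
    (y : ℝ) (hy : y < p) : Antitone (fun n => f^[n] y) :=
  antitone_nat_of_succ_le (fun n => (iter_chain_below f p hlt y hy n).2.le)

/-- A group of orientation-preserving homeomorphisms of `ℝ` in which every nontrivial
element has exactly one fixed point is abelian. -/
theorem solodov_abelian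
    (G : Subgroup (ℝ ≃ₜ ℝ))
    (hmono : ∀ g ∈ G, StrictMono (g : ℝ → ℝ))
    (hfix : ∀ g ∈ G, g ≠ 1 → ∃! x : ℝ, g x = x) :
    ∀ g ∈ G, ∀ h ∈ G, g * h = h * g := by
  intro g hg h hh
  -- notation for applying a subgroup element to a real
  let ap : ↥G → ℝ → ℝ := fun a x => (a : ℝ ≃ₜ ℝ) x
  have hap_mul : ∀ (a b : ↥G) (x : ℝ), ap (a*b) x = ap a (ap b x) := fun _ _ _ => rfl
  have hap_one : ∀ x : ℝ, ap 1 x = x := fun _ => rfl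
  have hap_inv : ∀ (a : ↥G) (x : ℝ), ap a⁻¹ (ap a x) = x :=
    fun a x => (a : ℝ ≃ₜ ℝ).symm_apply_apply x
  have hap_inv' : ∀ (a : ↥G) (x : ℝ), ap a (ap a⁻¹ x) = x :=
    fun a x => (a : ℝ ≃ₜ ℝ).apply_symm_apply x
  have M : ∀ a : ↥G, StrictMono (ap a) := fun a => hmono _ a.2
  have C : ∀ a : ↥G, Continuous (ap a) := fun a => (a : ℝ ≃ₜ ℝ).continuous
  have Fix : ∀ a : ↥G, a ≠ 1 → ∃! x : ℝ, ap a x = x := by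
    intro a ha
    refine hfix _ a.2 (fun hco => ha (Subtype.ext ?_))
    simpa using hco
  have hne_of_moves : ∀ (a : ↥G) (x : ℝ), ap a x ≠ x → a ≠ 1 := by
    intro a x hx he
    rw [he] at hx
    exact hx (hap_one x)
  have hpow_ap : ∀ (a : ↥G) (n : ℕ) (x : ℝ), ap (a^n) x = (ap a)^[n] x := by
    intro a n
    induction n with
    | zero => intro x; rw [pow_zero]; simp [hap_one]
    | succ k ih =>
      intro x
      rw [pow_succ']
      rw [hap_mul a (a^k) x, Function.iterate_succ_apply' (ap a) k x, ih]
  -- the positive cone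
  set S : Set ↥G := {f : ↥G | f ≠ 1 ∧ ∃ X : ℝ, ∀ x, X < x → x < ap f x} with hS
  have h1S : (1 : ↥G) ∉ S := fun hc => hc.1 rfl
  have hmulS : ∀ a ∈ S, ∀ b ∈ S, a * b ∈ S := by
    rintro a ⟨ha1, Xa, hXa⟩ b ⟨hb1, Xb, hXb⟩
    have key : ∀ x, max Xa Xb < x → x < ap (a*b) x := by
      intro x hx
      have hxa : Xa < x := lt_of_le_of_lt (le_max_left _ _) hx
      have hxb : Xb < x := lt_of_le_of_lt (le_max_right _ _) hx
      have h1 : x < ap b x := hXb x hxb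
      have h2 : ap b x < ap a (ap b x) := hXa _ (lt_trans hxa h1)
      rw [hap_mul]
      linarith
    have hk := key (max Xa Xb + 1) (lt_add_one _)
    exact ⟨hne_of_moves _ _ (ne_of_gt hk), max Xa Xb, key⟩
  have hconjS : ∀ a ∈ S, ∀ k : ↥G, k * a * k⁻¹ ∈ S := by
    rintro a ⟨ha1, Xa, hXa⟩ k
    constructor
    · intro hc
      apply ha1
      have : a = k⁻¹ * (k * a * k⁻¹) * k := by group
      rw [this, hc]
      group
    · refine ⟨ap k Xa, fun x hx => ?_⟩
      have h1 : Xa < ap k⁻¹ x := by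
        have := M k⁻¹ hx
        rwa [hap_inv] at this
      have h2 : ap k⁻¹ x < ap a (ap k⁻¹ x) := hXa _ h1
      have h3 := M k h2
      rw [hap_inv'] at h3
      rw [hap_mul, hap_mul]
      exact h3
  have htriS : ∀ a : ↥G, a ≠ 1 → a ∈ S ∨ a⁻¹ ∈ S := by
    intro a ha
    obtain ⟨p, hp, hpu⟩ := Fix a ha
    rcases sign_right (ap a) (C a) p hpu with H | H
    · exact Or.inl ⟨ha, p, H⟩
    · right
      refine ⟨inv_ne_one.mpr ha, p, fun x hx => ?_⟩
      by_contra hle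
      push_neg at hle
      have h2 := (M a).monotone hle
      rw [hap_inv'] at h2
      exact absurd (lt_of_le_of_lt h2 (H x hx)) (lt_irrefl x)
  have harchS : ∀ a ∈ S, ∀ b ∈ S, ∃ m : ℤ, a ^ m * b⁻¹ ∈ S ∪ {1} := by
    intro u hu v hv
    obtain ⟨hu1, Xu, hXu⟩ := hu
    obtain ⟨p, hp, hpu⟩ := Fix u hu1
    have hugt : ∀ x, p < x → x < ap u x := by
      rcases sign_right (ap u) (C u) p hpu with H | H
      · exact H
      · exfalso
        have hx : max Xu p < max Xu p + 1 := lt_add_one _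
        have h1 := hXu (max Xu p + 1) (lt_of_le_of_lt (le_max_left _ _) hx)
        have h2 := H (max Xu p + 1) (lt_of_le_of_lt (le_max_right _ _) hx)
        linarith
    -- final step given suitable points
    have finish : ∀ (n : ℕ) (x₀ x₁ : ℝ), x₁ < x₀ →
        x₀ < ap (u ^ (n:ℤ) * v⁻¹) x₀ → ap (u ^ (n:ℤ) * v⁻¹) x₁ < x₁ →
        u ^ (n:ℤ) * v⁻¹ ∈ S ∪ {1} := by
      intro n x₀ x₁ hx10 hz0 hz1
      set z := u ^ (n:ℤ) * v⁻¹ with hzdef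
      have zne : z ≠ 1 := hne_of_moves _ _ (ne_of_gt hz0)
      obtain ⟨q, hq, hqu⟩ := Fix z zne
      rcases sign_right (ap z) (C z) q hqu with H | H
      · exact Or.inl ⟨zne, q, H⟩
      · exfalso
        have hx0q : x₀ < q := by
          rcases lt_trichotomy x₀ q with h' | h' | h'
          · exact h'
          · rw [h'] at hz0; rw [hq] at hz0; exact absurd hz0 (lt_irrefl q)
          · exact absurd (H x₀ h') (not_lt.mpr hz0.le)
        rcases sign_left (ap z) (C z) q hqu with H2 | H2
        · exact absurd (H2 x₁ (lt_trans hx10 hx0q)) (not_lt.mpr hz1.le)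
        · exact absurd (H2 x₀ hx0q) (not_lt.mpr hz0.le)
    have hap_z : ∀ (n : ℕ) (y : ℝ), ap (u ^ (n:ℤ) * v⁻¹) (ap v y) = (ap u)^[n] y := by
      intro n y
      rw [hap_mul]
      have : ap (u ^ (n:ℤ)) = ap (u ^ n) := by
        norm_cast
      rw [hap_inv, this, hpow_ap]
    rcases sign_left (ap u) (C u) p hpu with Hl | Hl
    -- UP case : u > id below p too, so u ≥ id everywhere
    case inl =>
      have hoff : ∀ x, x ≠ p → x < ap u x := by
        intro x hx
        rcases lt_or_gt_of_ne hx with h' | h'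
        · exact Hl x h'
        · exact hugt x h'
      have hge : ∀ x, x ≤ ap u x := by
        intro x
        rcases eq_or_ne x p with rfl | hx
        · exact le_of_eq hp.symm
        · exact (hoff x hx).le
      -- every element fixes p
      have hfixall : ∀ k : ↥G, ap k p = p := by
        intro k
        by_contra hkp
        set w := u * (k * u * k⁻¹) with hw
        have hwap : ∀ x, ap w x = ap u (ap k (ap u (ap k⁻¹ x))) := by
          intro x; rw [hw, hap_mul, hap_mul, hap_mul]
        have hge2 : ∀ x, x ≤ ap k (ap u (ap k⁻¹ x)) := by
          intro x
          have h1 := (M k).monotone (hge (ap k⁻¹ x))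
          rwa [hap_inv'] at h1
        have hwge : ∀ x, x ≤ ap w x := fun x => le_trans (hge2 x) (by rw [hwap]; exact hge _)
        have hwkp : ap k p < ap w (ap k p) := by
          rw [hwap]
          rw [hap_inv, hp]
          exact hoff (ap k p) hkp
        have hwne : w ≠ 1 := hne_of_moves _ _ (ne_of_gt hwkp)
        obtain ⟨x, hx, -⟩ := Fix w hwne
        have e2 : x ≤ ap k (ap u (ap k⁻¹ x)) := hge2 x
        have e1 : ap k (ap u (ap k⁻¹ x)) ≤ x := by
          rw [hwap] at hx
          calc ap k (ap u (ap k⁻¹ x)) ≤ ap u (ap k (ap u (ap k⁻¹ x))) := hge _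
          _ = x := hx
        have e3 : ap k (ap u (ap k⁻¹ x)) = x := le_antisymm e1 e2
        have e4 : ap u x = x := by
          rw [hwap] at hx
          rw [e3] at hx
          exact hx
        have e5 : x = p := hpu x e4
        have e6 : ap u (ap k⁻¹ x) = ap k⁻¹ x := by
          apply (M k).injective
          rw [e3, hap_inv']
        have e7 : ap k⁻¹ x = p := hpu _ e6
        apply hkp
        have e8 := congrArg (ap k) e7
        rw [hap_inv'] at e8
        rw [← e8, e5]
      have hvp : ap v p = p := hfixall v
      set y₀ := p + 1 with hy₀
      set x₀ := ap v y₀ with hx₀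
      have hx₀p : p < x₀ := by
        rw [hx₀, ← hvp]
        exact M v (lt_add_one p)
      obtain ⟨n, hn⟩ := iter_unbounded (ap u) (C u) p hugt y₀ (lt_add_one p) x₀
      refine ⟨(n:ℤ), Or.inl ?_⟩
      set z := u ^ (n:ℤ) * v⁻¹ with hzdef
      have hz0 : x₀ < ap z x₀ := by
        rw [hzdef, hx₀, hap_z]
        exact hn
      have zne : z ≠ 1 := hne_of_moves _ _ (ne_of_gt hz0)
      have hzp : ap z p = p := by
        have : ap z (ap v p) = (ap u)^[n] p := hap_z n p
        rw [hvp] at this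
        rw [this]
        exact Function.iterate_fixed hp n
      obtain ⟨q, hq, hqu⟩ := Fix z zne
      have hqp : q = p := (hqu p hzp).symm
      rcases sign_right (ap z) (C z) q hqu with H | H
      · exact ⟨zne, q, H⟩
      · exfalso
        rw [hqp] at H
        exact absurd (H x₀ hx₀p) (not_lt.mpr hz0.le)
    -- REP case
    case inr =>
      set y₀ := p + 1 with hy₀
      set y₁ := p - 1 with hy₁
      set x₀ := ap v y₀ with hx₀
      set x₁ := ap v y₁ with hx₁
      have hx10 : x₁ < x₀ := M v (by rw [hy₀, hy₁]; linarith)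
      obtain ⟨n₁, hn₁⟩ := iter_unbounded (ap u) (C u) p hugt y₀ (lt_add_one p) x₀
      obtain ⟨n₂, hn₂⟩ := iter_unbounded_below (ap u) (C u) p Hl y₁ (by rw [hy₁]; linarith) x₁
      set n := max n₁ n₂ with hn
      have hA0 : x₀ < (ap u)^[n] y₀ :=
        lt_of_lt_of_le hn₁ (iter_mono (ap u) p hugt y₀ (lt_add_one p) (le_max_left _ _))
      have hA1 : (ap u)^[n] y₁ < x₁ :=
        lt_of_le_of_lt (iter_anti (ap u) p Hl y₁ (by rw [hy₁]; linarith) (le_max_right _ _)) hn₂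
      refine ⟨(n:ℤ), finish n x₀ x₁ hx10 ?_ ?_⟩
      · rw [hx₀, hap_z]; exact hA0
      · rw [hx₁, hap_z]; exact hA1
  have comm := holder_comm S h1S hmulS hconjS htriS harchS ⟨g, hg⟩ ⟨h, hh⟩
  exact congrArg Subtype.val comm
end

section
/- Let G be a group of homeomorphisms of ℝ² in which every element has product form, satisfying Axiom (A1), and such that the set of points fixed by at least one non-identity element of G is dense in ℝ². Then: (i) for every g ∈ G with g ≠ id, writing g(x,y) = (g₁(x), g₂(y)), neither g₁ nor g₂ is the identity of ℝ, and each of g₁ and g₂ has at most one fixed point in ℝ; (ii) no point x₀ ∈ ℝ satisfies g₁(x₀) = x₀ for all g ∈ G, and no point y₀ ∈ ℝ satisfies g₂(y₀) = y₀ for all g ∈ G. -/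
/-- A homeomorphism of `ℝ` is topologically contracting if all forward orbits
converge to a single point. -/
def TopContracting (f : ℝ ≃ₜ ℝ) : Prop :=
  ∃ p : ℝ, ∀ y : ℝ, Filter.Tendsto (fun n => (⇑f)^[n] y) Filter.atTop (nhds p)

/-- A homeomorphism of `ℝ` is topologically expanding if its inverse is
topologically contracting. -/
def TopExpanding (f : ℝ ≃ₜ ℝ) : Prop := TopContracting f.symm

/-- A homeomorphism of `ℝ²` has product form if it acts separately on the two
coordinates by homeomorphisms of `ℝ`. -/
def ProductForm (F : (ℝ × ℝ) ≃ₜ (ℝ × ℝ)) : Prop :=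
  ∃ f₁ f₂ : ℝ ≃ₜ ℝ, ∀ p : ℝ × ℝ, F p = (f₁ p.1, f₂ p.2)

/-- Axiom (A1) for a group of product-form homeomorphisms of the trivially
bifoliated plane `ℝ²`. -/
def AxiomA1 (G : Subgroup ((ℝ × ℝ) ≃ₜ (ℝ × ℝ))) : Prop :=
  ∀ g ∈ G, g ≠ 1 → ∀ f₁ f₂ : ℝ ≃ₜ ℝ, (∀ p : ℝ × ℝ, g p = (f₁ p.1, f₂ p.2)) →
    ((∃ x : ℝ, f₁ x = x) ∨ (∃ y : ℝ, f₂ y = y)) →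
    ((TopContracting f₁ ∧ TopExpanding f₂) ∨ (TopExpanding f₁ ∧ TopContracting f₂))

lemma TopContracting.fix_unique {f : ℝ ≃ₜ ℝ} (hf : TopContracting f) {x x' : ℝ}
    (hx : f x = x) (hx' : f x' = x') : x = x' := by
  obtain ⟨p, hp⟩ := hf
  have key : ∀ z : ℝ, f z = z → z = p := by
    intro z hz
    have h1 : (fun n => (⇑f)^[n] z) = fun _ => z :=
      funext fun n => Function.iterate_fixed hz n
    have h2 := hp z
    rw [h1] at h2
    exact tendsto_nhds_unique tendsto_const_nhds h2
  rw [key x hx, key x' hx']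

lemma TopContracting.exists_ne {f : ℝ ≃ₜ ℝ} (hf : TopContracting f) :
    ∃ x : ℝ, f x ≠ x := by
  by_contra h
  push_neg at h
  exact zero_ne_one (hf.fix_unique (h 0) (h 1))

lemma fix_symm {f : ℝ ≃ₜ ℝ} {x : ℝ} (hx : f x = x) : f.symm x = x := by
  have := f.symm_apply_apply x
  rwa [hx] at this

lemma TopExpanding.fix_unique {f : ℝ ≃ₜ ℝ} (hf : TopExpanding f) {x x' : ℝ}
    (hx : f x = x) (hx' : f x' = x') : x = x' :=
  TopContracting.fix_unique hf (fix_symm hx) (fix_symm hx')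

lemma TopExpanding.exists_ne {f : ℝ ≃ₜ ℝ} (hf : TopExpanding f) :
    ∃ x : ℝ, f x ≠ x := by
  obtain ⟨x, hx⟩ := TopContracting.exists_ne hf
  exact ⟨x, fun h => hx (fix_symm h)⟩

lemma good_of_or {f : ℝ ≃ₜ ℝ} (h : TopContracting f ∨ TopExpanding f) :
    (∃ x : ℝ, f x ≠ x) ∧ ∀ x x' : ℝ, f x = x → f x' = x' → x = x' := by
  rcases h with h | h
  · exact ⟨h.exists_ne, fun _ _ hx hx' => h.fix_unique hx hx'⟩
  · exact ⟨h.exists_ne, fun _ _ hx hx' => h.fix_unique hx hx'⟩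

/-- For a product-form group satisfying Axiom (A1) with dense fixed points:
(i) the coordinate maps of every nontrivial element are nontrivial and have at most
one fixed point each; (ii) neither coordinate action has a global fixed point. -/
theorem coordinate_actions_solodov_hypotheses
    (G : Subgroup ((ℝ × ℝ) ≃ₜ (ℝ × ℝ)))
    (hprod : ∀ g ∈ G, ProductForm g)
    (hA1 : AxiomA1 G)
    (hfixdense : Dense {p : ℝ × ℝ | ∃ g ∈ G, g ≠ 1 ∧ g p = p}) :
    (∀ g ∈ G, g ≠ 1 → ∀ f₁ f₂ : ℝ ≃ₜ ℝ, (∀ p : ℝ × ℝ, g p = (f₁ p.1, f₂ p.2)) →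
      ((∃ x : ℝ, f₁ x ≠ x) ∧ (∃ y : ℝ, f₂ y ≠ y) ∧
       (∀ x x' : ℝ, f₁ x = x → f₁ x' = x' → x = x') ∧
       (∀ y y' : ℝ, f₂ y = y → f₂ y' = y' → y = y'))) ∧
    (¬ ∃ x₀ : ℝ, ∀ g ∈ G, (g (x₀, (0 : ℝ))).1 = x₀) ∧
    (¬ ∃ y₀ : ℝ, ∀ g ∈ G, (g ((0 : ℝ), y₀)).2 = y₀) := by
  have claim1 : ∀ g ∈ G, g ≠ 1 → ∀ f₁ f₂ : ℝ ≃ₜ ℝ, (∀ p : ℝ × ℝ, g p = (f₁ p.1, f₂ p.2)) →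
      ((∃ x : ℝ, f₁ x ≠ x) ∧ (∃ y : ℝ, f₂ y ≠ y) ∧
       (∀ x x' : ℝ, f₁ x = x → f₁ x' = x' → x = x') ∧
       (∀ y y' : ℝ, f₂ y = y → f₂ y' = y' → y = y')) := by
    intro g hg hne f₁ f₂ hf
    by_cases hfix : (∃ x : ℝ, f₁ x = x) ∨ (∃ y : ℝ, f₂ y = y)
    · rcases hA1 g hg hne f₁ f₂ hf hfix with ⟨h1, h2⟩ | ⟨h1, h2⟩
      · obtain ⟨e1, u1⟩ := good_of_or (Or.inl h1)
        obtain ⟨e2, u2⟩ := good_of_or (Or.inr h2)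
        exact ⟨e1, e2, u1, u2⟩
      · obtain ⟨e1, u1⟩ := good_of_or (Or.inr h1)
        obtain ⟨e2, u2⟩ := good_of_or (Or.inl h2)
        exact ⟨e1, e2, u1, u2⟩
    · push_neg at hfix
      obtain ⟨h1, h2⟩ := hfix
      exact ⟨⟨0, h1 0⟩, ⟨0, h2 0⟩, fun x x' hx _ => absurd hx (h1 x),
        fun y y' hy _ => absurd hy (h2 y)⟩
  refine ⟨claim1, ?_, ?_⟩
  · rintro ⟨x₀, hx₀⟩
    have hopen : IsOpen {p : ℝ × ℝ | p.1 ≠ x₀} := isOpen_ne.preimage continuous_fst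
    have hnon : {p : ℝ × ℝ | p.1 ≠ x₀}.Nonempty := ⟨(x₀ + 1, 0), by simp⟩
    obtain ⟨p, hp1, g, hgG, hgne, hgp⟩ :=
      hfixdense.inter_open_nonempty _ hopen hnon
    obtain ⟨f₁, f₂, hf⟩ := hprod g hgG
    have h1 : f₁ p.1 = p.1 := by
      have := hf p
      rw [hgp] at this
      exact (congrArg Prod.fst this).symm
    have h2 : f₁ x₀ = x₀ := by
      have := hx₀ g hgG
      rw [hf (x₀, 0)] at this
      exact this
    exact hp1 ((claim1 g hgG hgne f₁ f₂ hf).2.2.1 p.1 x₀ h1 h2)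
  · rintro ⟨y₀, hy₀⟩
    have hopen : IsOpen {p : ℝ × ℝ | p.2 ≠ y₀} := isOpen_ne.preimage continuous_snd
    have hnon : {p : ℝ × ℝ | p.2 ≠ y₀}.Nonempty := ⟨(0, y₀ + 1), by simp⟩
    obtain ⟨p, hp2, g, hgG, hgne, hgp⟩ :=
      hfixdense.inter_open_nonempty _ hopen hnon
    obtain ⟨f₁, f₂, hf⟩ := hprod g hgG
    have h1 : f₂ p.2 = p.2 := by
      have := hf p
      rw [hgp] at this
      exact (congrArg Prod.snd this).symm
    have h2 : f₂ y₀ = y₀ := by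
      have := hy₀ g hgG
      rw [hf (0, y₀)] at this
      exact this
    exact hp2 ((claim1 g hgG hgne f₁ f₂ hf).2.2.2 p.2 y₀ h1 h2)
end

section
/- Let a, b, c, d ∈ ℝ with a ≠ 0 and c ≠ 0, and let g be the homeomorphism of ℝ² given by g(x,y) = (a x + b, c y + d); assume g ≠ id. Suppose that whenever g maps some vertical or horizontal line of ℝ² to itself, one of the coordinate maps x ↦ a x + b, y ↦ c y + d is topologically contracting on ℝ and the other is topologically expanding on ℝ. Then a = 1 if and only if c = 1; and if a ≠ 1, then either |a| > 1 and |c| < 1, or |a| < 1 and |c| > 1. -/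
/-- A self-map of `ℝ` is topologically contracting if all forward orbits converge
to a single point. -/
def TopContractingFun (f : ℝ → ℝ) : Prop :=
  ∃ p : ℝ, ∀ y : ℝ, Filter.Tendsto (fun n => f^[n] y) Filter.atTop (nhds p)

lemma contracting_slope (k m : ℝ) (f : ℝ → ℝ) (hf : ∀ x, f x = k * x + m)
    (h : TopContractingFun f) : |k| < 1 := by
  obtain ⟨p, hp⟩ := h
  have hcont : Continuous f := by
    have : f = fun x => k * x + m := funext hf
    rw [this]; continuity
  have hfix : k * p + m = p := by
    have h1 := hp p
    have h2 : Filter.Tendsto (fun n => f^[n + 1] p) Filter.atTop (nhds (f p)) := by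
      simp only [Function.iterate_succ_apply']
      exact (hcont.continuousAt.tendsto).comp h1
    have h3 : Filter.Tendsto (fun n => f^[n + 1] p) Filter.atTop (nhds p) :=
      h1.comp (Filter.tendsto_add_atTop_nat 1)
    have := tendsto_nhds_unique h2 h3
    rw [hf p] at this; exact this
  have hiter : ∀ (n : ℕ) (y : ℝ), f^[n] y = k ^ n * (y - p) + p := by
    intro n
    induction n with
    | zero => intro y; simp
    | succ n ih =>
      intro y
      rw [Function.iterate_succ_apply', ih, hf]
      linear_combination hfix
  have hpow : Filter.Tendsto (fun n : ℕ => k ^ n) Filter.atTop (nhds 0) := by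
    have h1 := hp (p + 1)
    simp only [hiter] at h1
    have h2 : Filter.Tendsto (fun n : ℕ => k ^ n * (p + 1 - p) + p - p)
        Filter.atTop (nhds (p - p)) := h1.sub tendsto_const_nhds
    simpa using h2
  exact tendsto_pow_atTop_nhds_zero_iff.mp hpow

/-- Constraints on the linear parts of an element `(x,y) ↦ (ax+b, cy+d)` of an
Anosov-like affine action on the trivially bifoliated plane: if the element is not
the identity and satisfies the hyperbolicity alternative whenever it preserves a
vertical or horizontal line, then `a = 1 ↔ c = 1`, and if `a ≠ 1` then one of
`|a|, |c|` is `> 1` and the other `< 1`. -/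
theorem affine_linear_parts
    (a b c d : ℝ) (ha : a ≠ 0) (hc : c ≠ 0)
    (hne : ∃ p : ℝ × ℝ, (a * p.1 + b, c * p.2 + d) ≠ p)
    (hhyp : ((∃ x : ℝ, a * x + b = x) ∨ (∃ y : ℝ, c * y + d = y)) →
      ((TopContractingFun (fun x => a * x + b) ∧
        TopContractingFun (fun y => (y - d) / c)) ∨
       (TopContractingFun (fun x => (x - b) / a) ∧
        TopContractingFun (fun y => c * y + d)))) :
    (a = 1 ↔ c = 1) ∧
    (a ≠ 1 → ((1 < |a| ∧ |c| < 1) ∨ (|a| < 1 ∧ 1 < |c|))) := by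
  have key : (a ≠ 1 ∨ c ≠ 1) →
      ((1 < |a| ∧ |c| < 1) ∨ (|a| < 1 ∧ 1 < |c|)) := by
    intro hor
    have hfix : (∃ x : ℝ, a * x + b = x) ∨ (∃ y : ℝ, c * y + d = y) := by
      rcases hor with h1 | h1
      · left
        have h2 : (1:ℝ) - a ≠ 0 := sub_ne_zero.mpr (Ne.symm h1)
        exact ⟨b / (1 - a), by field_simp; ring⟩
      · right
        have h2 : (1:ℝ) - c ≠ 0 := sub_ne_zero.mpr (Ne.symm h1)
        exact ⟨d / (1 - c), by field_simp; ring⟩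
    rcases hhyp hfix with ⟨h1, h2⟩ | ⟨h1, h2⟩
    · have ha1 : |a| < 1 := contracting_slope a b _ (fun x => rfl) h1
      have hc1 : |1 / c| < 1 := contracting_slope (1 / c) (-d / c) _
        (fun x => by field_simp; ring) h2
      rw [abs_div, abs_one, div_lt_one (abs_pos.mpr hc)] at hc1
      exact Or.inr ⟨ha1, hc1⟩
    · have hc1 : |c| < 1 := contracting_slope c d _ (fun x => rfl) h2
      have ha1 : |1 / a| < 1 := contracting_slope (1 / a) (-b / a) _
        (fun x => by field_simp; ring) h1
      rw [abs_div, abs_one, div_lt_one (abs_pos.mpr ha)] at ha1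
      exact Or.inl ⟨ha1, hc1⟩
  constructor
  · constructor
    · intro ha1
      by_contra hc1
      rcases key (Or.inr hc1) with ⟨h, _⟩ | ⟨h, _⟩ <;> rw [ha1] at h <;> simp at h
    · intro hc1
      by_contra ha1
      rcases key (Or.inl ha1) with ⟨_, h⟩ | ⟨_, h⟩ <;> rw [hc1] at h <;> simp at h
  · intro ha1; exact key (Or.inl ha1)
end

section
/- Let λ₁, λ₂, λ₃ be nonzero real numbers such that λ₁, λ₂ are algebraically independent over ℚ and λ₁, λ₃ are algebraically independent over ℚ. Let t, a, b, b' be the homeomorphisms of ℝ given by t(x) = x + 1, a(x) = λ₁x, b(x) = λ₂x, b'(x) = λ₃x, and let G₂ and G₃ be the subgroups of the homeomorphism group of ℝ generated by {t, a, b} and {t, a, b'} respectively. Then there is a group isomorphism Φ : G₂ → G₃ with Φ(t) = t, Φ(a) = a and Φ(b) = b'. -/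
noncomputable section AffineCounterexample

/-- Laurent polynomials in two variables over ℤ. -/
abbrev LP2 := AddMonoidAlgebra ℤ (ℤ × ℤ)

namespace AffineCtx

def Lam (l₁ l₂ : ℝ) (a : ℤ × ℤ) : ℝ := l₁ ^ a.1 * l₂ ^ a.2

lemma Lam_ne_zero {l₁ l₂ : ℝ} (h₁ : l₁ ≠ 0) (h₂ : l₂ ≠ 0) (a : ℤ × ℤ) :
    Lam l₁ l₂ a ≠ 0 :=
  mul_ne_zero (zpow_ne_zero _ h₁) (zpow_ne_zero _ h₂)

lemma Lam_add {l₁ l₂ : ℝ} (h₁ : l₁ ≠ 0) (h₂ : l₂ ≠ 0) (a b : ℤ × ℤ) :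
    Lam l₁ l₂ (a + b) = Lam l₁ l₂ a * Lam l₁ l₂ b := by
  simp only [Lam, Prod.fst_add, Prod.snd_add, zpow_add₀ h₁, zpow_add₀ h₂]
  ring

def LamHom (l₁ l₂ : ℝ) (h₁ : l₁ ≠ 0) (h₂ : l₂ ≠ 0) : Multiplicative (ℤ × ℤ) →* ℝ where
  toFun a := Lam l₁ l₂ a.toAdd
  map_one' := by simp [Lam]
  map_mul' a b := Lam_add h₁ h₂ a.toAdd b.toAdd

def ev (l₁ l₂ : ℝ) (h₁ : l₁ ≠ 0) (h₂ : l₂ ≠ 0) : LP2 →ₐ[ℤ] ℝ :=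
  AddMonoidAlgebra.lift ℤ ℝ (ℤ × ℤ) (LamHom l₁ l₂ h₁ h₂)

lemma ev_single (l₁ l₂ : ℝ) (h₁ : l₁ ≠ 0) (h₂ : l₂ ≠ 0) (a : ℤ × ℤ) (b : ℤ) :
    ev l₁ l₂ h₁ h₂ (AddMonoidAlgebra.single a b) = b * Lam l₁ l₂ a := by
  rw [ev, AddMonoidAlgebra.lift_single]
  simp [LamHom, zsmul_eq_mul]

end AffineCtx
end AffineCounterexample
section Model
open AddMonoidAlgebra

/-- model group: affine maps x ↦ Λ^a x + p -/
structure MG where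
  a : ℤ × ℤ
  p : LP2

namespace MG

noncomputable instance : Group MG where
  mul g h := ⟨g.a + h.a, AddMonoidAlgebra.single g.a 1 * h.p + g.p⟩
  one := ⟨0, 0⟩
  inv g := ⟨-g.a, -(AddMonoidAlgebra.single (-g.a) 1 * g.p)⟩
  mul_assoc g h k := by
    show MG.mk _ _ = MG.mk _ _
    congr 1
    · exact add_assoc _ _ _
    · show AddMonoidAlgebra.single (g.a + h.a) 1 * k.p + (AddMonoidAlgebra.single g.a 1 * h.p + g.p)
        = AddMonoidAlgebra.single g.a 1 * (AddMonoidAlgebra.single h.a 1 * k.p + h.p) + g.p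
      have hs : AddMonoidAlgebra.single g.a (1:ℤ) * AddMonoidAlgebra.single h.a 1
          = AddMonoidAlgebra.single (g.a + h.a) (1:ℤ) := by
        rw [AddMonoidAlgebra.single_mul_single, one_mul]
      rw [← hs]; ring
  one_mul g := by
    obtain ⟨a, p⟩ := g
    show MG.mk (0 + a) (AddMonoidAlgebra.single (0 : ℤ × ℤ) 1 * p + 0) = MG.mk a p
    have : (AddMonoidAlgebra.single (0 : ℤ × ℤ) (1:ℤ) : LP2) = 1 := rfl
    simp [this]
  mul_one g := by
    obtain ⟨a, p⟩ := g
    show MG.mk (a + 0) (AddMonoidAlgebra.single a 1 * 0 + p) = MG.mk a p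
    simp
  inv_mul_cancel g := by
    show MG.mk (-g.a + g.a) (AddMonoidAlgebra.single (-g.a) 1 * g.p
        + -(AddMonoidAlgebra.single (-g.a) 1 * g.p)) = MG.mk 0 0
    simp

lemma mul_def (g h : MG) :
    g * h = ⟨g.a + h.a, AddMonoidAlgebra.single g.a 1 * h.p + g.p⟩ := rfl

lemma one_def : (1 : MG) = ⟨0, 0⟩ := rfl

@[simp] lemma a_one : (1 : MG).a = 0 := rfl
@[simp] lemma p_one : (1 : MG).p = 0 := rfl

end MG
end Model
noncomputable section Ev
namespace AffineCtx

lemma homeo_mul_apply (f g : ℝ ≃ₜ ℝ) (x : ℝ) : (f * g) x = f (g x) := rfl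
lemma homeo_one_apply (x : ℝ) : (1 : ℝ ≃ₜ ℝ) x = x := rfl

/-- affine homeomorphism x ↦ d + c x -/
def aff (c : ℝ) (hc : c ≠ 0) (d : ℝ) : ℝ ≃ₜ ℝ :=
  (Homeomorph.mulLeft₀ c hc).trans (Homeomorph.addLeft d)

lemma aff_apply (c : ℝ) (hc : c ≠ 0) (d x : ℝ) : aff c hc d x = d + c * x := rfl

/-- the evaluation group hom from the model group to homeomorphisms of ℝ -/
def evHom (l₁ l₂ : ℝ) (h₁ : l₁ ≠ 0) (h₂ : l₂ ≠ 0) : MG →* (ℝ ≃ₜ ℝ) where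
  toFun g := aff (Lam l₁ l₂ g.a) (Lam_ne_zero h₁ h₂ g.a) (ev l₁ l₂ h₁ h₂ g.p)
  map_one' := by
    apply Homeomorph.ext; intro x
    show aff _ _ _ x = x
    rw [aff_apply]
    simp [Lam, MG.a_one, MG.p_one]
  map_mul' g h := by
    apply Homeomorph.ext; intro x
    show aff _ _ _ x = aff _ _ _ (aff _ _ _ x)
    rw [aff_apply, aff_apply, aff_apply, MG.mul_def]
    simp only [map_add, map_mul, ev_single, Lam_add h₁ h₂]
    push_cast
    ring

end AffineCtx
end Ev
noncomputable section Inj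
namespace AffineCtx
open MvPolynomial

lemma prod_single_single (x : Fin 2 → ℝ) (i j : ℕ) :
    (Finsupp.single (0 : Fin 2) i + Finsupp.single 1 j).prod (fun n e => x n ^ e)
      = x 0 ^ i * x 1 ^ j := by
  rw [Finsupp.prod_add_index (by intro a _; exact pow_zero _)
      (by intro a _ b c; exact pow_add _ _ _),
    Finsupp.prod_single_index (h := fun n e => x n ^ e) (pow_zero _),
    Finsupp.prod_single_index (h := fun n e => x n ^ e) (pow_zero _)]

lemma ev_injective (l₁ l₂ : ℝ) (h₁ : l₁ ≠ 0) (h₂ : l₂ ≠ 0)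
    (hind : AlgebraicIndependent ℚ ![l₁, l₂]) :
    Function.Injective (ev l₁ l₂ h₁ h₂) := by
  have hinj := algebraicIndependent_iff.1 hind
  rw [injective_iff_map_eq_zero]
  intro p hp
  -- shift exponents to be nonnegative
  set M : ℕ := p.coeff.support.sup (fun s => (-s.1).toNat ⊔ (-s.2).toNat) with hM
  set c : ℤ × ℤ := ((M : ℤ), (M : ℤ)) with hc
  set q : LP2 := AddMonoidAlgebra.single c 1 * p with hq
  have hq_apply : ∀ y, q.coeff y = p.coeff (-c + y) := by
    intro y
    rw [hq, AddMonoidAlgebra.coeff_single_mul_apply, one_mul]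
  have hq_nonneg : ∀ y ∈ q.coeff.support, 0 ≤ y.1 ∧ 0 ≤ y.2 := by
    intro y hy
    rw [Finsupp.mem_support_iff, hq_apply] at hy
    have hmem : -c + y ∈ p.coeff.support := Finsupp.mem_support_iff.2 hy
    have hle := Finset.le_sup (f := fun s => (-s.1).toNat ⊔ (-s.2).toNat) hmem
    rw [← hM] at hle
    constructor
    · have h1 : (-(-c + y).1).toNat ≤ M := le_trans le_sup_left hle
      have := Int.toNat_le.1 h1
      simp only [hc, Prod.fst_add, Prod.fst_neg] at this
      omega
    · have h1 : (-(-c + y).2).toNat ≤ M := le_trans le_sup_right hle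
      have := Int.toNat_le.1 h1
      simp only [hc, Prod.snd_add, Prod.snd_neg] at this
      omega
  have hevq : ev l₁ l₂ h₁ h₂ q = 0 := by
    rw [hq, map_mul, hp, mul_zero]
  -- the corresponding polynomial
  set idx : ℤ × ℤ → (Fin 2 →₀ ℕ) :=
    fun s => Finsupp.single 0 s.1.toNat + Finsupp.single 1 s.2.toNat with hidx
  have hidx_eval : ∀ s, idx s 0 = s.1.toNat ∧ idx s 1 = s.2.toNat := by
    intro s
    simp [hidx, Finsupp.single_apply]
  have hidx_inj : ∀ s ∈ q.coeff.support, ∀ s' ∈ q.coeff.support, idx s = idx s' → s = s' := by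
    intro s hs s' hs' h
    obtain ⟨hs1, hs2⟩ := hq_nonneg s hs
    obtain ⟨hs1', hs2'⟩ := hq_nonneg s' hs'
    have e0 : idx s 0 = idx s' 0 := by rw [h]
    have e1 : idx s 1 = idx s' 1 := by rw [h]
    rw [(hidx_eval s).1, (hidx_eval s').1] at e0
    rw [(hidx_eval s).2, (hidx_eval s').2] at e1
    have : s.1 = s'.1 := by omega
    have : s.2 = s'.2 := by omega
    exact Prod.ext (by omega) (by omega)
  set P : MvPolynomial (Fin 2) ℚ :=
    ∑ s ∈ q.coeff.support, MvPolynomial.monomial (idx s) ((q.coeff s : ℚ)) with hP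
  have haeval : MvPolynomial.aeval ![l₁, l₂] P = ev l₁ l₂ h₁ h₂ q := by
    rw [hP, map_sum, ev, AddMonoidAlgebra.lift_apply]
    rw [Finsupp.sum]
    refine Finset.sum_congr rfl ?_
    intro s hs
    rw [aeval_monomial, hidx, prod_single_single]
    obtain ⟨hs1, hs2⟩ := hq_nonneg s hs
    have e1 : l₁ ^ (s.1.toNat) = l₁ ^ s.1 := by
      rw [← zpow_natCast, Int.toNat_of_nonneg hs1]
    have e2 : l₂ ^ (s.2.toNat) = l₂ ^ s.2 := by
      rw [← zpow_natCast, Int.toNat_of_nonneg hs2]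
    simp only [Matrix.cons_val_zero, Matrix.cons_val_one, Matrix.head_cons, e1, e2]
    show ((q.coeff s : ℚ) : ℝ) * _ = (q.coeff s) • (LamHom l₁ l₂ h₁ h₂ (Multiplicative.ofAdd s))
    simp only [LamHom, MonoidHom.coe_mk, OneHom.coe_mk, zsmul_eq_mul]
    push_cast
    rfl
  have hP0 : P = 0 := hinj P (by rw [haeval, hevq])
  have hq0 : q = 0 := by
    ext y
    by_contra hy
    have hy' : y ∈ q.coeff.support := Finsupp.mem_support_iff.2 (by simpa using hy)
    have := congrArg (MvPolynomial.coeff (idx y)) hP0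
    rw [hP] at this
    simp only [MvPolynomial.coeff_sum, MvPolynomial.coeff_monomial,
      MvPolynomial.coeff_zero] at this
    rw [Finset.sum_eq_single y (fun s hs hne => by
        rw [if_neg (fun h => hne (hidx_inj s hs y hy' h))])
      (fun h => absurd hy' h), if_pos rfl] at this
    exact hy (by exact_mod_cast this)
  -- recover p = 0
  have : AddMonoidAlgebra.single (-c) (1:ℤ) * q = p := by
    rw [hq, ← mul_assoc, AddMonoidAlgebra.single_mul_single, neg_add_cancel, one_mul]
    have : (AddMonoidAlgebra.single (0 : ℤ × ℤ) (1:ℤ) : LP2) = 1 := rfl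
    rw [this, one_mul]
  rw [← this, hq0, mul_zero]

end AffineCtx
end Inj
noncomputable section Range
namespace AffineCtx
open AddMonoidAlgebra

def gT : MG := ⟨0, AddMonoidAlgebra.single 0 1⟩
def gA : MG := ⟨(1, 0), 0⟩
def gB : MG := ⟨(0, 1), 0⟩

lemma single_zero_one : (AddMonoidAlgebra.single (0 : ℤ × ℤ) (1:ℤ) : LP2) = 1 := rfl

variable {l₁ l₂ : ℝ} (h₁ : l₁ ≠ 0) (h₂ : l₂ ≠ 0)

lemma evHom_gT : evHom l₁ l₂ h₁ h₂ gT = Homeomorph.addLeft (1 : ℝ) := by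
  apply Homeomorph.ext; intro x
  show aff _ _ _ x = 1 + x
  rw [aff_apply]
  simp only [gT]
  rw [ev_single]
  simp [Lam]

lemma evHom_gA : evHom l₁ l₂ h₁ h₂ gA = Homeomorph.mulLeft₀ l₁ h₁ := by
  apply Homeomorph.ext; intro x
  show aff _ _ _ x = l₁ * x
  rw [aff_apply]
  simp [gA, Lam]

lemma evHom_gB : evHom l₁ l₂ h₁ h₂ gB = Homeomorph.mulLeft₀ l₂ h₂ := by
  apply Homeomorph.ext; intro x
  show aff _ _ _ x = l₂ * x
  rw [aff_apply]
  simp [gB, Lam]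

/-- `a ↦ ⟨a, 0⟩` as a monoid hom -/
def iotaA : Multiplicative (ℤ × ℤ) →* MG where
  toFun a := ⟨a.toAdd, 0⟩
  map_one' := rfl
  map_mul' a b := by
    show MG.mk _ _ = MG.mk _ _
    congr 1
    simp

/-- `b ↦ ⟨0, single 0 b⟩` as a monoid hom -/
def iotaT : Multiplicative ℤ →* MG where
  toFun b := ⟨0, AddMonoidAlgebra.single 0 b.toAdd⟩
  map_one' := by
    show MG.mk 0 (AddMonoidAlgebra.single 0 (0:ℤ)) = MG.mk 0 0
    rw [AddMonoidAlgebra.single_zero]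
  map_mul' a b := by
    show MG.mk _ _ = MG.mk _ _
    congr 1
    show AddMonoidAlgebra.single (0:ℤ×ℤ) (a.toAdd + b.toAdd)
        = AddMonoidAlgebra.single 0 1 * AddMonoidAlgebra.single 0 b.toAdd
          + AddMonoidAlgebra.single 0 a.toAdd
    rw [AddMonoidAlgebra.single_mul_single, one_mul, add_zero,
      AddMonoidAlgebra.single_add, add_comm]

lemma range_sub_closure (S : Subgroup (ℝ ≃ₜ ℝ))
    (hT : Homeomorph.addLeft (1:ℝ) ∈ S)
    (hA : Homeomorph.mulLeft₀ l₁ h₁ ∈ S)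
    (hB : Homeomorph.mulLeft₀ l₂ h₂ ∈ S) :
    ∀ g : MG, evHom l₁ l₂ h₁ h₂ g ∈ S := by
  have hmulpart : ∀ a : ℤ × ℤ, evHom l₁ l₂ h₁ h₂ ⟨a, 0⟩ ∈ S := by
    intro a
    have key : (⟨a, 0⟩ : MG) = iotaA (Multiplicative.ofAdd a) := rfl
    have hdec : (Multiplicative.ofAdd a)
        = (Multiplicative.ofAdd ((1:ℤ), (0:ℤ))) ^ a.1
          * (Multiplicative.ofAdd ((0:ℤ), (1:ℤ))) ^ a.2 := by
      rw [← ofAdd_zsmul, ← ofAdd_zsmul, ← ofAdd_add]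
      congr 1
      simp [Prod.ext_iff]
    rw [key, hdec, map_mul, map_mul, map_zpow, map_zpow, map_zpow, map_zpow]
    have e1 : evHom l₁ l₂ h₁ h₂ (iotaA (Multiplicative.ofAdd ((1:ℤ), (0:ℤ))))
        = Homeomorph.mulLeft₀ l₁ h₁ := evHom_gA h₁ h₂
    have e2 : evHom l₁ l₂ h₁ h₂ (iotaA (Multiplicative.ofAdd ((0:ℤ), (1:ℤ))))
        = Homeomorph.mulLeft₀ l₂ h₂ := evHom_gB h₁ h₂
    rw [e1, e2]
    exact mul_mem (zpow_mem hA _) (zpow_mem hB _)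
  have htrans : ∀ p : LP2, evHom l₁ l₂ h₁ h₂ ⟨0, p⟩ ∈ S := by
    set P : LP2 → Prop := fun p => evHom l₁ l₂ h₁ h₂ ⟨0, p⟩ ∈ S with hPdef
    have hzero : P 0 := by
      show evHom l₁ l₂ h₁ h₂ ⟨0, 0⟩ ∈ S
      have : (⟨0, 0⟩ : MG) = 1 := rfl
      rw [this, map_one]; exact one_mem S
    have hadd : ∀ s t : LP2, P s → P t → P (s + t) := by
      intro s t hs ht
      show evHom l₁ l₂ h₁ h₂ ⟨0, s + t⟩ ∈ S
      have key : (⟨0, s + t⟩ : MG) = (⟨0, s⟩ : MG) * ⟨0, t⟩ := by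
        rw [MG.mul_def]
        simp only [MG.mk.injEq]
        refine ⟨by simp, ?_⟩
        rw [single_zero_one, one_mul, add_comm]
      rw [key, map_mul]
      exact mul_mem hs ht
    have hneg : ∀ f : LP2, P f → P (-f) := by
      intro f hf
      show evHom l₁ l₂ h₁ h₂ ⟨0, -f⟩ ∈ S
      have key : (⟨0, -f⟩ : MG) = (⟨0, f⟩ : MG)⁻¹ := by
        show MG.mk _ _ = MG.mk _ _
        simp only [MG.mk.injEq]
        refine ⟨by simp, ?_⟩
        rw [neg_zero, single_zero_one, one_mul]
      rw [key, map_inv]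
      exact inv_mem hf
    have hsingle : ∀ (a : ℤ × ℤ), P (AddMonoidAlgebra.single a 1) := by
      intro a
      show evHom l₁ l₂ h₁ h₂ ⟨0, AddMonoidAlgebra.single a 1⟩ ∈ S
      have conj : (⟨0, AddMonoidAlgebra.single a 1⟩ : MG)
          = (⟨a, 0⟩ : MG) * (⟨0, AddMonoidAlgebra.single 0 1⟩ : MG) * (⟨a, 0⟩ : MG)⁻¹ := by
        have hinv : (⟨a, 0⟩ : MG)⁻¹ = ⟨-a, 0⟩ := by
          show MG.mk _ _ = _
          simp
        rw [hinv, MG.mul_def, MG.mul_def]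
        dsimp only
        simp only [MG.mk.injEq]
        refine ⟨by abel, ?_⟩
        rw [AddMonoidAlgebra.single_mul_single, mul_one, add_zero]
        simp
      have hgT : (⟨0, AddMonoidAlgebra.single 0 1⟩ : MG) = gT := rfl
      rw [conj, map_mul, map_mul, map_inv, hgT, evHom_gT h₁ h₂]
      exact mul_mem (mul_mem (hmulpart a) hT) (inv_mem (hmulpart a))
    have hsmul : ∀ (r : ℤ) (f : LP2), P f → P (r • f) := by
      intro r f hf
      induction r using Int.induction_on with
      | zero => simpa using hzero
      | succ n ih => rw [add_smul, one_smul]; exact hadd _ _ ih hf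
      | pred n ih => rw [sub_smul, one_smul, sub_eq_add_neg]; exact hadd _ _ ih (hneg f hf)
    intro p
    refine AddMonoidAlgebra.induction_on p ?_ hadd hsmul
    intro g
    have : (AddMonoidAlgebra.of ℤ (ℤ × ℤ)) (Multiplicative.ofAdd g)
        = AddMonoidAlgebra.single g 1 := rfl
    rw [this]
    exact hsingle g
  intro g
  have : g = (⟨0, g.p⟩ : MG) * ⟨g.a, 0⟩ := by
    rw [MG.mul_def]
    simp [single_zero_one]
  rw [this, map_mul]
  exact mul_mem (htrans g.p) (hmulpart g.a)

lemma range_eq_closure :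
    (evHom l₁ l₂ h₁ h₂).range
      = Subgroup.closure {Homeomorph.addLeft (1 : ℝ), Homeomorph.mulLeft₀ l₁ h₁,
          Homeomorph.mulLeft₀ l₂ h₂} := by
  apply le_antisymm
  · rintro x ⟨g, rfl⟩
    apply range_sub_closure h₁ h₂
    · exact Subgroup.subset_closure (Set.mem_insert _ _)
    · exact Subgroup.subset_closure (Set.mem_insert_of_mem _ (Set.mem_insert _ _))
    · exact Subgroup.subset_closure (Set.mem_insert_of_mem _ (Set.mem_insert_of_mem _ rfl))
  · rw [Subgroup.closure_le]
    rintro x (rfl | rfl | rfl)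
    · exact ⟨gT, evHom_gT h₁ h₂⟩
    · exact ⟨gA, evHom_gA h₁ h₂⟩
    · exact ⟨gB, evHom_gB h₁ h₂⟩

end AffineCtx
end Range
noncomputable section Assemble
namespace AffineCtx

lemma evHom_injective {l₁ l₂ : ℝ} (h₁ : l₁ ≠ 0) (h₂ : l₂ ≠ 0)
    (hind : AlgebraicIndependent ℚ ![l₁, l₂]) :
    Function.Injective (evHom l₁ l₂ h₁ h₂) := by
  have hev := ev_injective l₁ l₂ h₁ h₂ hind
  rw [injective_iff_map_eq_one]
  intro g hg
  have h0 : evHom l₁ l₂ h₁ h₂ g 0 = 0 := by rw [hg]; rfl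
  have h1 : evHom l₁ l₂ h₁ h₂ g 1 = 1 := by rw [hg]; rfl
  rw [show evHom l₁ l₂ h₁ h₂ g (0:ℝ)
      = ev l₁ l₂ h₁ h₂ g.p + Lam l₁ l₂ g.a * 0 from rfl] at h0
  rw [show evHom l₁ l₂ h₁ h₂ g (1:ℝ)
      = ev l₁ l₂ h₁ h₂ g.p + Lam l₁ l₂ g.a * 1 from rfl] at h1
  have hp : ev l₁ l₂ h₁ h₂ g.p = 0 := by linarith [h0]
  have hLam : Lam l₁ l₂ g.a = 1 := by
    rw [hp] at h1; linarith
  have hp0 : g.p = 0 := hev (by rw [hp, map_zero])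
  have ha0 : g.a = 0 := by
    have : ev l₁ l₂ h₁ h₂ (AddMonoidAlgebra.single g.a 1)
        = ev l₁ l₂ h₁ h₂ (AddMonoidAlgebra.single 0 1) := by
      rw [ev_single, ev_single, hLam]
      simp [Lam]
    have := hev this
    rcases AddMonoidAlgebra.single_inj.1 this with ⟨h, _⟩ | ⟨h, _⟩
    · exact h
    · norm_num at h
  show g = 1
  rw [MG.one_def, ← ha0, ← hp0]

/-- the isomorphism from the model group to the closure subgroup -/
def modelIso (l₁ l₂ : ℝ) (h₁ : l₁ ≠ 0) (h₂ : l₂ ≠ 0)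
    (hind : AlgebraicIndependent ℚ ![l₁, l₂]) :
    MG ≃* (Subgroup.closure {Homeomorph.addLeft (1 : ℝ), Homeomorph.mulLeft₀ l₁ h₁,
        Homeomorph.mulLeft₀ l₂ h₂} : Subgroup (ℝ ≃ₜ ℝ)) :=
  (MonoidHom.ofInjective (evHom_injective h₁ h₂ hind)).trans
    (MulEquiv.subgroupCongr (range_eq_closure h₁ h₂))

lemma modelIso_apply (l₁ l₂ : ℝ) (h₁ : l₁ ≠ 0) (h₂ : l₂ ≠ 0)
    (hind : AlgebraicIndependent ℚ ![l₁, l₂]) (g : MG) :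
    (modelIso l₁ l₂ h₁ h₂ hind g : ℝ ≃ₜ ℝ) = evHom l₁ l₂ h₁ h₂ g := by
  rfl

end AffineCtx
end Assemble
/-- The groups of homeomorphisms of `ℝ` generated by `x ↦ x + 1`, `x ↦ λ₁x`, `x ↦ λ₂x`
and by `x ↦ x + 1`, `x ↦ λ₁x`, `x ↦ λ₃x` are isomorphic, by an isomorphism fixing the
first two generators and exchanging `x ↦ λ₂x` with `x ↦ λ₃x`. -/
theorem affine_counterexample_groups_isomorphic
    (l₁ l₂ l₃ : ℝ) (h₁ : l₁ ≠ 0) (h₂ : l₂ ≠ 0) (h₃ : l₃ ≠ 0)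
    (hind₂ : AlgebraicIndependent ℚ ![l₁, l₂])
    (hind₃ : AlgebraicIndependent ℚ ![l₁, l₃]) :
    ∃ Φ : (Subgroup.closure
             {Homeomorph.addLeft (1 : ℝ), Homeomorph.mulLeft₀ l₁ h₁,
              Homeomorph.mulLeft₀ l₂ h₂} : Subgroup (ℝ ≃ₜ ℝ)) ≃*
          (Subgroup.closure
             {Homeomorph.addLeft (1 : ℝ), Homeomorph.mulLeft₀ l₁ h₁,
              Homeomorph.mulLeft₀ l₃ h₃} : Subgroup (ℝ ≃ₜ ℝ)),
      ((Φ ⟨Homeomorph.addLeft (1 : ℝ),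
            Subgroup.subset_closure (Set.mem_insert _ _)⟩ : ℝ ≃ₜ ℝ)
          = Homeomorph.addLeft (1 : ℝ)) ∧
      ((Φ ⟨Homeomorph.mulLeft₀ l₁ h₁,
            Subgroup.subset_closure
              (Set.mem_insert_of_mem _ (Set.mem_insert _ _))⟩ : ℝ ≃ₜ ℝ)
          = Homeomorph.mulLeft₀ l₁ h₁) ∧
      ((Φ ⟨Homeomorph.mulLeft₀ l₂ h₂,
            Subgroup.subset_closure
              (Set.mem_insert_of_mem _
                (Set.mem_insert_of_mem _ rfl))⟩ : ℝ ≃ₜ ℝ)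
          = Homeomorph.mulLeft₀ l₃ h₃) := by
  classical
  set iso₂ := AffineCtx.modelIso l₁ l₂ h₁ h₂ hind₂ with hiso₂
  set iso₃ := AffineCtx.modelIso l₁ l₃ h₁ h₃ hind₃ with hiso₃
  refine ⟨iso₂.symm.trans iso₃, ?_, ?_, ?_⟩
  · have h2T : iso₂ AffineCtx.gT = ⟨Homeomorph.addLeft (1 : ℝ),
        Subgroup.subset_closure (Set.mem_insert _ _)⟩ := by
      apply Subtype.ext
      rw [hiso₂, AffineCtx.modelIso_apply, AffineCtx.evHom_gT]
    show ((iso₃ (iso₂.symm _) : _) : ℝ ≃ₜ ℝ) = _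
    rw [(MulEquiv.symm_apply_eq _).2 h2T.symm, AffineCtx.modelIso_apply,
      AffineCtx.evHom_gT]
  · have h2A : iso₂ AffineCtx.gA = ⟨Homeomorph.mulLeft₀ l₁ h₁,
        Subgroup.subset_closure (Set.mem_insert_of_mem _ (Set.mem_insert _ _))⟩ := by
      apply Subtype.ext
      rw [hiso₂, AffineCtx.modelIso_apply, AffineCtx.evHom_gA]
    show ((iso₃ (iso₂.symm _) : _) : ℝ ≃ₜ ℝ) = _
    rw [(MulEquiv.symm_apply_eq _).2 h2A.symm, AffineCtx.modelIso_apply,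
      AffineCtx.evHom_gA]
  · have h2B : iso₂ AffineCtx.gB = ⟨Homeomorph.mulLeft₀ l₂ h₂,
        Subgroup.subset_closure
          (Set.mem_insert_of_mem _ (Set.mem_insert_of_mem _ rfl))⟩ := by
      apply Subtype.ext
      rw [hiso₂, AffineCtx.modelIso_apply, AffineCtx.evHom_gB]
    show ((iso₃ (iso₂.symm _) : _) : ℝ ≃ₜ ℝ) = _
    rw [(MulEquiv.symm_apply_eq _).2 h2B.symm, AffineCtx.modelIso_apply,
      AffineCtx.evHom_gB]
end

section
/- Let λ₁ be an irrational real number and let λ₂, λ₃ be nonzero real numbers with λ₂ ≠ λ₃. Then there is no continuous map H : ℝ² → ℝ² satisfying H ∘ τ₁ = τ₁ ∘ H, H ∘ τ₂ = τ₂ ∘ H, H ∘ f_{λ₁} = f_{λ₁} ∘ H and H ∘ f_{λ₂} = f_{λ₃} ∘ H. -/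
/-- The actions of `⟨τ₁, τ₂, f_{λ₁}, f_{λ₂}⟩` and `⟨τ₁, τ₂, f_{λ₁}, f_{λ₃}⟩` on `ℝ²`
are not conjugate: there is no continuous map `H` of `ℝ²` semiconjugating `τ₁`, `τ₂`
and `f_{λ₁}` to themselves, and `f_{λ₂}` to `f_{λ₃}`. -/
theorem no_conjugacy_of_affine_actions
    (l₁ l₂ l₃ : ℝ) (h₁ : Irrational l₁) (h₂ : l₂ ≠ 0) (h₃ : l₃ ≠ 0)
    (hne : l₂ ≠ l₃) :
    ¬ ∃ H : ℝ × ℝ → ℝ × ℝ, Continuous H ∧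
      (H ∘ (fun p : ℝ × ℝ => (p.1 + 1, p.2)) = (fun p : ℝ × ℝ => (p.1 + 1, p.2)) ∘ H) ∧
      (H ∘ (fun p : ℝ × ℝ => (p.1, p.2 + 1)) = (fun p : ℝ × ℝ => (p.1, p.2 + 1)) ∘ H) ∧
      (H ∘ (fun p : ℝ × ℝ => (l₁ * p.1, l₁⁻¹ * p.2))
        = (fun p : ℝ × ℝ => (l₁ * p.1, l₁⁻¹ * p.2)) ∘ H) ∧
      (H ∘ (fun p : ℝ × ℝ => (l₂ * p.1, l₂⁻¹ * p.2))
        = (fun p : ℝ × ℝ => (l₃ * p.1, l₃⁻¹ * p.2)) ∘ H) := by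
  rintro ⟨H, hc, ht1, _, _, hf⟩
  -- the "displacement" of the first coordinate along the x-axis
  set φ : ℝ → ℝ := fun x => (H (x, 0)).1 - x with hφdef
  have hφc : Continuous φ := by
    have : Continuous fun x : ℝ => H (x, 0) :=
      hc.comp (continuous_id.prodMk continuous_const)
    exact (continuous_fst.comp this).sub continuous_id
  have hper : Function.Periodic φ 1 := by
    intro x
    have h := congrFun ht1 (x, 0)
    simp only [Function.comp] at h
    have h1 : (H (x + 1, 0)).1 = (H (x, 0)).1 + 1 := by
      rw [h]
    simp only [hφdef, h1]
    ring
  -- φ is bounded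
  obtain ⟨M, hM⟩ : ∃ M, ∀ x, |φ x| ≤ M := by
    obtain ⟨x₀, -, hx₀⟩ := (isCompact_Icc (a := (0 : ℝ)) (b := 1)).exists_isMaxOn
      ⟨0, by norm_num⟩ ((continuous_abs.comp hφc).continuousOn)
    rw [isMaxOn_iff] at hx₀
    refine ⟨|φ x₀|, fun x => ?_⟩
    have hfr : φ x = φ (Int.fract x) := by
      have h := (hper.sub_int_mul_eq (x := x) ⌊x⌋).symm
      rwa [mul_one, Int.self_sub_floor] at h
    rw [hfr]
    exact hx₀ (Int.fract x) ⟨(Int.fract_nonneg x), le_of_lt (by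
      simpa using Int.fract_lt_one x)⟩
  have hM0 : 0 ≤ M := le_trans (abs_nonneg _) (hM 0)
  -- the semiconjugacy relation on the x-axis
  have key : ∀ x : ℝ, (l₂ - l₃) * x = l₃ * φ x - φ (l₂ * x) := by
    intro x
    have h := congrFun hf (x, 0)
    simp only [Function.comp] at h
    have h1 : (H (l₂ * x, l₂⁻¹ * 0)).1 = l₃ * (H (x, 0)).1 := by rw [h]
    rw [mul_zero] at h1
    simp only [hφdef]
    rw [h1]
    ring
  -- pick a large x to get a contradiction
  have hd : 0 < |l₂ - l₃| := abs_pos.mpr (sub_ne_zero.mpr hne)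
  set x := (|l₃| * M + M + 1) / |l₂ - l₃| with hx
  have hbound : |(l₂ - l₃) * x| ≤ |l₃| * M + M := by
    rw [key x]
    calc |l₃ * φ x - φ (l₂ * x)| ≤ |l₃ * φ x| + |φ (l₂ * x)| := abs_sub _ _
      _ ≤ |l₃| * M + M := by
          rw [abs_mul]
          exact add_le_add (mul_le_mul_of_nonneg_left (hM x) (abs_nonneg _)) (hM _)
  have hval : |(l₂ - l₃) * x| = |l₃| * M + M + 1 := by
    rw [abs_mul, hx, abs_div, abs_abs, abs_of_nonneg (by positivity : (0:ℝ) ≤ |l₃| * M + M + 1)]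
    field_simp
  linarith [hbound, hval.symm.le]
end

section
/- Let λ be an irrational real number. If h : ℝ → ℝ is continuous and satisfies h(x + 1) = h(x) + 1 and h(λx) = λ h(x) for all x ∈ ℝ, then h is the identity map. -/
/-- A continuous map of `ℝ` commuting with `x ↦ x + 1` and with multiplication by an
irrational number `λ` is the identity. -/
theorem commutes_with_translation_and_irrational_scaling_eq_id
    (l : ℝ) (hl : Irrational l) (h : ℝ → ℝ) (hc : Continuous h)
    (htr : ∀ x : ℝ, h (x + 1) = h x + 1)
    (hsc : ∀ x : ℝ, h (l * x) = l * h x) :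
    ∀ x : ℝ, h x = x := by
  set g : ℝ → ℝ := fun x => h x - x with hg
  have hgc : Continuous g := hc.sub continuous_id
  have hper : Function.Periodic g 1 := by
    intro x; simp only [hg, htr x]; ring
  have hgsc : ∀ x, g (l * x) = l * g x := by
    intro x; simp only [hg, hsc x]; ring
  -- boundedness of g
  obtain ⟨M, hM⟩ : ∃ M, ∀ y ∈ Set.Icc (0:ℝ) 1, ‖g y‖ ≤ M :=
    isCompact_Icc.exists_bound_of_continuousOn hgc.continuousOn
  have hbound : ∀ x, |g x| ≤ M := by
    intro x
    have h1 : g (x - (⌊x⌋ : ℝ) * 1) = g x := hper.sub_int_mul_eq ⌊x⌋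
    rw [mul_one] at h1
    have h2 : x - (⌊x⌋ : ℝ) ∈ Set.Icc (0:ℝ) 1 := by
      constructor
      · linarith [Int.floor_le x]
      · linarith [Int.lt_floor_add_one x]
    calc |g x| = ‖g (x - (⌊x⌋ : ℝ))‖ := by rw [h1]; rfl
      _ ≤ M := hM _ h2
  -- l ≠ 0, |l| ≠ 1
  have hl0 : l ≠ 0 := fun e => hl.ne_rat 0 (by exact_mod_cast e)
  have habs : |l| ≠ 1 := by
    intro e
    rcases abs_eq (by norm_num : (0:ℝ) ≤ 1) |>.mp e with e1 | e1
    · exact hl.ne_rat 1 (by exact_mod_cast e1)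
    · exact hl.ne_rat (-1) (by push_cast; exact e1)
  -- pick c with |c| > 1 and g (c * x) = c * g x
  obtain ⟨c, hc1, hcsc⟩ : ∃ c : ℝ, 1 < |c| ∧ ∀ x, g (c * x) = c * g x := by
    rcases lt_or_gt_of_ne habs with hlt | hgt
    · refine ⟨l⁻¹, ?_, ?_⟩
      · rw [abs_inv]
        exact (one_lt_inv₀ (abs_pos.mpr hl0)).mpr hlt
      · intro x
        have := hgsc (l⁻¹ * x)
        rw [← mul_assoc, mul_inv_cancel₀ hl0, one_mul] at this
        rw [this]
        field_simp
    · exact ⟨l, hgt, hgsc⟩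
  have hiter : ∀ (n : ℕ) (x : ℝ), g (c ^ n * x) = c ^ n * g x := by
    intro n
    induction n with
    | zero => simp
    | succ k ih =>
      intro x
      have e : c ^ (k + 1) * x = c * (c ^ k * x) := by ring
      rw [e, hcsc, ih]; ring
  -- conclude g = 0
  have hg0 : ∀ x, g x = 0 := by
    intro x
    by_contra hgx
    have hpos : 0 < |g x| := abs_pos.mpr hgx
    obtain ⟨n, hn⟩ := pow_unbounded_of_one_lt (M / |g x|) hc1
    have := hbound (c ^ n * x)
    rw [hiter n x, abs_mul, abs_pow] at this
    have : |c| ^ n ≤ M / |g x| := (le_div_iff₀ hpos).mpr this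
    linarith
  intro x
  have := hg0 x
  simp [hg] at this
  linarith [this]
end

section
/- Let λ be a nonzero irrational real number. If H : ℝ² → ℝ² is continuous and satisfies H ∘ τ₁ = τ₁ ∘ H, H ∘ τ₂ = τ₂ ∘ H and H ∘ f_λ = f_λ ∘ H, then H is the identity map of ℝ². -/
private lemma zero_of_scaled {g : ℝ × ℝ → ℝ} {S : ℝ × ℝ → ℝ × ℝ} {μ C : ℝ}
    (hμ : 1 < |μ|) (hC : ∀ p, |g p| ≤ C) (h : ∀ p, g (S p) = μ * g p) :
    ∀ p, g p = 0 := by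
  intro p
  by_contra hg
  have hiter : ∀ n : ℕ, g (S^[n] p) = μ ^ n * g p := by
    intro n
    induction n with
    | zero => simp
    | succ n ih => rw [Function.iterate_succ_apply', h, ih, pow_succ]; ring
  obtain ⟨n, hn⟩ := pow_unbounded_of_one_lt (C / |g p|) hμ
  have hgp : 0 < |g p| := abs_pos.mpr hg
  have h1 : C < |μ| ^ n * |g p| := by rwa [div_lt_iff₀ hgp] at hn
  have h2 := hC (S^[n] p)
  rw [hiter n, abs_mul, abs_pow] at h2
  linarith

/-- A continuous map of `ℝ²` commuting with the translations `τ₁`, `τ₂` and with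
`f_λ : (x,y) ↦ (λx, λ⁻¹y)` for `λ` nonzero irrational is the identity. -/
theorem centralizer_of_affine_subgroup_trivial
    (l : ℝ) (hl0 : l ≠ 0) (hl : Irrational l)
    (H : ℝ × ℝ → ℝ × ℝ) (hc : Continuous H)
    (h₁ : H ∘ (fun p : ℝ × ℝ => (p.1 + 1, p.2)) = (fun p : ℝ × ℝ => (p.1 + 1, p.2)) ∘ H)
    (h₂ : H ∘ (fun p : ℝ × ℝ => (p.1, p.2 + 1)) = (fun p : ℝ × ℝ => (p.1, p.2 + 1)) ∘ H)
    (h₃ : H ∘ (fun p : ℝ × ℝ => (l * p.1, l⁻¹ * p.2))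
        = (fun p : ℝ × ℝ => (l * p.1, l⁻¹ * p.2)) ∘ H) :
    ∀ p : ℝ × ℝ, H p = p := by
  have habs : |l| ≠ 1 := by
    intro h
    rcases abs_eq (by norm_num : (0:ℝ) ≤ 1) |>.mp h with h' | h'
    · exact hl.ne_int 1 (by simpa using h')
    · exact hl.ne_int (-1) (by simpa using h')
  have key : ∀ (g : ℝ × ℝ → ℝ) (μ : ℝ), Continuous g → μ ≠ 0 → |μ| ≠ 1 →
      (∀ p : ℝ × ℝ, g (p.1 + 1, p.2) = g p) →
      (∀ p : ℝ × ℝ, g (p.1, p.2 + 1) = g p) →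
      (∀ p : ℝ × ℝ, g (l * p.1, l⁻¹ * p.2) = μ * g p) →
      ∀ p, g p = 0 := by
    intro g μ hgc hμ0 hμ1 hp1 hp2 hsc
    -- boundedness
    have hK : IsCompact (Set.Icc (0:ℝ) 1 ×ˢ Set.Icc (0:ℝ) 1) :=
      (isCompact_Icc).prod isCompact_Icc
    obtain ⟨C, hC⟩ := hK.exists_bound_of_continuousOn hgc.continuousOn
    have hfract : ∀ p : ℝ × ℝ, g p = g (Int.fract p.1, Int.fract p.2) := by
      intro p
      have per1 : Function.Periodic (fun x => g (x, Int.fract p.2)) 1 := fun x => hp1 (x, _)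
      have per2 : Function.Periodic (fun y => g (p.1, y)) 1 := fun y => hp2 (p.1, y)
      calc g p = g (p.1, Int.fract p.2) := by
              have h := per2.sub_int_mul_eq (x := p.2) ⌊p.2⌋
              simp only [mul_one] at h
              simp only [Int.fract]
              exact h.symm
        _ = g (Int.fract p.1, Int.fract p.2) := by
              have h := per1.sub_int_mul_eq (x := p.1) ⌊p.1⌋
              simp only [mul_one] at h
              simp only [Int.fract]
              exact h.symm
    have hbd : ∀ p, |g p| ≤ C := by
      intro p
      rw [hfract p]
      have hm : (Int.fract p.1, Int.fract p.2) ∈ Set.Icc (0:ℝ) 1 ×ˢ Set.Icc (0:ℝ) 1 := by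
        constructor <;>
          exact ⟨Int.fract_nonneg _, (Int.fract_lt_one _).le⟩
      simpa using hC _ hm
    -- inverse scaling
    have hsc' : ∀ p : ℝ × ℝ, g (l⁻¹ * p.1, l * p.2) = μ⁻¹ * g p := by
      intro p
      have := hsc (l⁻¹ * p.1, l * p.2)
      simp only [mul_inv_cancel_left₀ hl0, inv_mul_cancel_left₀ hl0] at this
      rw [this]
      field_simp
    rcases lt_or_gt_of_ne hμ1 with hlt | hgt
    · have h1 : 1 < |μ⁻¹| := by
        rw [abs_inv]
        rw [one_lt_inv_iff₀]
        exact ⟨abs_pos.mpr hμ0, hlt⟩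
      exact zero_of_scaled h1 hbd hsc'
    · exact zero_of_scaled hgt hbd hsc
  have e1 : ∀ p : ℝ × ℝ, H (p.1 + 1, p.2) = ((H p).1 + 1, (H p).2) := fun p => congrFun h₁ p
  have e2 : ∀ p : ℝ × ℝ, H (p.1, p.2 + 1) = ((H p).1, (H p).2 + 1) := fun p => congrFun h₂ p
  have e3 : ∀ p : ℝ × ℝ, H (l * p.1, l⁻¹ * p.2) = (l * (H p).1, l⁻¹ * (H p).2) :=
    fun p => congrFun h₃ p
  have hl1 : |l⁻¹| ≠ 1 := by
    rw [abs_inv]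
    intro h
    exact habs (by rw [← inv_inv |l|, h, inv_one])
  have ha := key (fun p => (H p).1 - p.1) l
    (((continuous_fst.comp hc)).sub continuous_fst) hl0 habs
    (fun p => by simp [e1 p]) (fun p => by simp [e2 p])
    (fun p => by simp [e3 p]; ring)
  have hb := key (fun p => (H p).2 - p.2) l⁻¹
    (((continuous_snd.comp hc)).sub continuous_snd) (inv_ne_zero hl0) hl1
    (fun p => by simp [e1 p]) (fun p => by simp [e2 p])
    (fun p => by simp [e3 p]; ring)
  intro p
  have h1 := ha p
  have h2 := hb p
  simp only [sub_eq_zero] at h1 h2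
  exact Prod.ext h1 h2
end

section
/- Let G be a group of homeomorphisms of ℝ² in which every element has product form and which satisfies Axiom (A1). Fix c ∈ ℝ and let S = {g ∈ G : g maps the vertical line {c} × ℝ to itself}. Then the subgroup of S consisting of those g whose coordinate maps g₁ and g₂ are both strictly increasing is abelian. -/
section Holder

variable {G : Type*} [Group G] [LinearOrder G]

theorem holder_comm_s17
    (hl : ∀ (a : G) {b c : G}, b < c → a * b < a * c)
    (hr : ∀ (a : G) {b c : G}, b < c → b * a < c * a)
    (harch : ∀ a : G, 1 < a → ∀ b : G, ∃ n : ℕ, b < a ^ n)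
    (x y : G) : x * y = y * x := by
  -- ≤ versions of covariance
  have hl' : ∀ (a : G) {b c : G}, b ≤ c → a * b ≤ a * c := by
    intro a b c h
    rcases h.lt_or_eq with h | h
    · exact (hl a h).le
    · rw [h]
  have hr' : ∀ (a : G) {b c : G}, b ≤ c → b * a ≤ c * a := by
    intro a b c h
    rcases h.lt_or_eq with h | h
    · exact (hr a h).le
    · rw [h]
  have hmul_le : ∀ {a b c d : G}, a ≤ b → c ≤ d → a * c ≤ b * d := fun hab hcd =>
    le_trans (hl' _ hcd) (hr' _ hab)
  -- powers are monotone
  have hpow_le : ∀ {u v : G}, u ≤ v → ∀ n : ℕ, u ^ n ≤ v ^ n := by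
    intro u v h n
    induction n with
    | zero => simp
    | succ k ih => rw [pow_succ, pow_succ]; exact hmul_le ih h
  -- L-lemmas
  have S : ∀ {u v : G}, u * v ≤ v * u → ∀ n : ℕ, u ^ n * v ≤ v * u ^ n := by
    intro u v h n
    induction n with
    | zero => simp
    | succ k ih =>
      have : u ^ (k + 1) * v = u * (u ^ k * v) := by rw [pow_succ']; group
      rw [this]
      calc u * (u ^ k * v) ≤ u * (v * u ^ k) := hl' _ ih
        _ = (u * v) * u ^ k := by group
        _ ≤ (v * u) * u ^ k := hr' _ h
        _ = v * u ^ (k + 1) := by rw [pow_succ']; group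
  have L2 : ∀ {u v : G}, u * v ≤ v * u → ∀ n : ℕ, u ^ n * v ^ n ≤ (u * v) ^ n := by
    intro u v h n
    induction n with
    | zero => simp
    | succ k ih =>
      calc u ^ (k+1) * v ^ (k+1) = u * (u ^ k * v) * v ^ k := by
            rw [pow_succ', pow_succ']; group
        _ ≤ u * (v * u ^ k) * v ^ k := hr' _ (hl' _ (S h k))
        _ = (u * v) * (u ^ k * v ^ k) := by group
        _ ≤ (u * v) * (u * v) ^ k := hl' _ ih
        _ = (u * v) ^ (k + 1) := by rw [pow_succ']
  have L3 : ∀ {u v : G}, u * v ≤ v * u → ∀ n : ℕ, (u * v) ^ n ≤ v ^ n * u ^ n := by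
    intro u v h n
    induction n with
    | zero => simp
    | succ k ih =>
      calc (u * v) ^ (k + 1) = (u * v) ^ k * (u * v) := by rw [pow_succ]
        _ ≤ (v ^ k * u ^ k) * (u * v) := hr' _ ih
        _ = v ^ k * (u ^ (k+1) * v) := by rw [pow_succ']; group
        _ ≤ v ^ k * (v * u ^ (k+1)) := hl' _ (S h (k+1))
        _ = v ^ (k+1) * u ^ (k+1) := by rw [pow_succ']; group
  have S' : ∀ {u v : G}, v * u ≤ u * v → ∀ n : ℕ, v * u ^ n ≤ u ^ n * v := by
    intro u v h n
    induction n with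
    | zero => simp
    | succ k ih =>
      calc v * u ^ (k+1) = (v * u ^ k) * u := by rw [pow_succ]; group
        _ ≤ (u ^ k * v) * u := hr' _ ih
        _ = u ^ k * (v * u) := by group
        _ ≤ u ^ k * (u * v) := hl' _ h
        _ = u ^ (k+1) * v := by rw [pow_succ]; group
  have L3' : ∀ {u v : G}, v * u ≤ u * v → ∀ n : ℕ, (u * v) ^ n ≤ u ^ n * v ^ n := by
    intro u v h n
    induction n with
    | zero => simp
    | succ k ih =>
      calc (u * v) ^ (k + 1) = (u * v) * (u * v) ^ k := by rw [pow_succ']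
        _ ≤ (u * v) * (u ^ k * v ^ k) := hl' _ ih
        _ = u * (v * u ^ k) * v ^ k := by group
        _ ≤ u * (u ^ k * v) * v ^ k := hr' _ (hl' _ (S' h k))
        _ = u ^ (k+1) * v ^ (k+1) := by rw [pow_succ', pow_succ']; group
  -- main step: no commutator can be > 1
  have key : ∀ u v : G, 1 < u⁻¹ * v⁻¹ * u * v → False := by
    intro u v hd
    set a : G := u⁻¹ * v⁻¹ * u * v with ha_def
    have ha : 1 < a := hd
    -- positivity of natural powers
    have hpow_pos : ∀ n : ℕ, n ≠ 0 → 1 < a ^ n := by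
      intro n hn
      induction n with
      | zero => exact absurd rfl hn
      | succ k ih =>
        rcases Nat.eq_zero_or_pos k with hk | hk
        · subst hk; simpa using ha
        · have h1 : 1 < a ^ k := ih hk.ne'
          calc (1:G) < a := ha
            _ = 1 * a := (one_mul a).symm
            _ < a ^ k * a := hr a h1
            _ = a ^ (k+1) := (pow_succ a k).symm
    have hzpow_pos : ∀ k : ℤ, 0 < k → 1 < a ^ k := by
      intro k hk
      have h1 : a ^ k = a ^ k.toNat := by
        rw [← zpow_natCast, Int.toNat_of_nonneg hk.le]
      rw [h1]
      exact hpow_pos k.toNat (by omega)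
    have hzmono : ∀ {m l : ℤ}, m < l → a ^ m < a ^ l := by
      intro m l hml
      have h1 : a ^ l = a ^ m * a ^ (l - m) := by
        rw [← zpow_add]; ring_nf
      rw [h1]
      calc a ^ m = a ^ m * 1 := (mul_one _).symm
        _ < a ^ m * a ^ (l - m) := hl _ (hzpow_pos _ (by omega))
    have hzreflect : ∀ {m l : ℤ}, a ^ m ≤ a ^ l → m ≤ l := by
      intro m l h
      by_contra hc
      exact absurd h (not_le.mpr (hzmono (by omega)))
    -- the integer logarithm base a
    have hM : ∀ g : G, ∃ m : ℤ, a ^ m ≤ g ∧ ∀ z : ℤ, a ^ z ≤ g → z ≤ m := by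
      intro g
      have Hbdd : ∃ b : ℤ, ∀ z : ℤ, a ^ z ≤ g → z ≤ b := by
        obtain ⟨n, hn⟩ := harch a ha g
        refine ⟨n, fun z hz => ?_⟩
        have : a ^ z ≤ a ^ (n : ℤ) := by
          rw [zpow_natCast]; exact hz.trans hn.le
        exact hzreflect this
      have Hinh : ∃ z : ℤ, a ^ z ≤ g := by
        obtain ⟨n, hn⟩ := harch a ha g⁻¹
        refine ⟨-(n:ℤ), ?_⟩
        have h1 : g⁻¹ * (a ^ n)⁻¹ < a ^ n * (a ^ n)⁻¹ := hr _ hn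
        rw [mul_inv_cancel] at h1
        have h2 : g * (g⁻¹ * (a ^ n)⁻¹) < g * 1 := hl g h1
        rw [mul_one, ← mul_assoc, mul_inv_cancel, one_mul] at h2
        rw [zpow_neg, zpow_natCast]
        exact h2.le
      exact Int.exists_greatest_of_bdd Hbdd Hinh
    choose M hM1 hM2 using hM
    have Mupper : ∀ g : G, g < a ^ (M g + 1) := by
      intro g
      by_contra hc
      have := hM2 g (M g + 1) (not_lt.mp hc)
      omega
    -- quasi-additivity
    have F2 : ∀ p q : G, ∀ n : ℕ,
        M (p ^ n) + M (q ^ n) ≤ M ((p * q) ^ n) ∧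
        M ((p * q) ^ n) ≤ M (p ^ n) + M (q ^ n) + 1 := by
      intro p q n
      rcases le_total (p * q) (q * p) with h | h
      · constructor
        · apply hM2
          calc a ^ (M (p ^ n) + M (q ^ n)) = a ^ M (p ^ n) * a ^ M (q ^ n) := zpow_add a _ _
            _ ≤ p ^ n * q ^ n := hmul_le (hM1 _) (hM1 _)
            _ ≤ (p * q) ^ n := L2 h n
        · have hup : (p * q) ^ n < a ^ (M (p ^ n) + M (q ^ n) + 2) := by
            calc (p * q) ^ n ≤ q ^ n * p ^ n := L3 h n
              _ < q ^ n * a ^ (M (p ^ n) + 1) := hl _ (Mupper _)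
              _ ≤ a ^ (M (q ^ n) + 1) * a ^ (M (p ^ n) + 1) := hr' _ (Mupper _).le
              _ = a ^ (M (p ^ n) + M (q ^ n) + 2) := by rw [← zpow_add]; ring_nf
          have h1 : a ^ M ((p * q) ^ n) < a ^ (M (p ^ n) + M (q ^ n) + 2) :=
            lt_of_le_of_lt (hM1 _) hup
          have := hzreflect h1.le
          -- strict: M ((p*q)^n) < sum + 2
          by_contra hc
          push_neg at hc
          have h2 : a ^ (M (p ^ n) + M (q ^ n) + 2) ≤ a ^ M ((p * q) ^ n) := by
            rcases eq_or_lt_of_le (show M (p ^ n) + M (q ^ n) + 2 ≤ M ((p*q)^n) by omega) with he | hlt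
            · rw [he]
            · exact (hzmono hlt).le
          exact absurd (lt_of_le_of_lt h2 h1) (lt_irrefl _)
      · constructor
        · apply hM2
          calc a ^ (M (p ^ n) + M (q ^ n)) = a ^ M (q ^ n) * a ^ M (p ^ n) := by
                rw [← zpow_add]; ring_nf
            _ ≤ q ^ n * p ^ n := hmul_le (hM1 _) (hM1 _)
            _ ≤ (q * p) ^ n := L2 h n
            _ ≤ (p * q) ^ n := hpow_le h n
        · have hup : (p * q) ^ n < a ^ (M (p ^ n) + M (q ^ n) + 2) := by
            calc (p * q) ^ n ≤ p ^ n * q ^ n := L3' h n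
              _ < p ^ n * a ^ (M (q ^ n) + 1) := hl _ (Mupper _)
              _ ≤ a ^ (M (p ^ n) + 1) * a ^ (M (q ^ n) + 1) := hr' _ (Mupper _).le
              _ = a ^ (M (p ^ n) + M (q ^ n) + 2) := by rw [← zpow_add]; ring_nf
          have h1 : a ^ M ((p * q) ^ n) < a ^ (M (p ^ n) + M (q ^ n) + 2) :=
            lt_of_le_of_lt (hM1 _) hup
          by_contra hc
          push_neg at hc
          have h2 : a ^ (M (p ^ n) + M (q ^ n) + 2) ≤ a ^ M ((p * q) ^ n) := by
            rcases eq_or_lt_of_le (show M (p ^ n) + M (q ^ n) + 2 ≤ M ((p*q)^n) by omega) with he | hlt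
            · rw [he]
            · exact (hzmono hlt).le
          exact absurd (lt_of_le_of_lt h2 h1) (lt_irrefl _)
    have Mone : M (1 : G) = 0 := by
      have h0 : (0:ℤ) ≤ M (1:G) := hM2 1 0 (by simp)
      have h1 : M (1:G) < 1 := by
        by_contra hc
        push_neg at hc
        have h2 : a ^ (1:ℤ) ≤ a ^ M (1:G) := by
          rcases eq_or_lt_of_le hc with he | hlt
          · rw [he]
          · exact (hzmono hlt).le
        have h3 : a ^ M (1:G) ≤ 1 := hM1 1
        have : a ^ (1:ℤ) ≤ 1 := h2.trans h3
        rw [zpow_one] at this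
        exact absurd this (not_le.mpr ha)
      omega
    have Minv : ∀ p : G, ∀ n : ℕ, M (p ^ n) + M ((p⁻¹) ^ n) ≤ 0 := by
      intro p n
      have := (F2 p p⁻¹ n).1
      rw [mul_inv_cancel, one_pow, Mone] at this
      exact this
    -- bound M (a ^ n)
    have Mdbound : ∀ n : ℕ, M (a ^ n) ≤ 3 := by
      intro n
      have e1 : a = u⁻¹ * (v⁻¹ * (u * v)) := by rw [ha_def]; group
      have h1 : M (a ^ n) ≤ M ((u⁻¹) ^ n) + M ((v⁻¹ * (u * v)) ^ n) + 1 := by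
        rw [e1]; exact (F2 _ _ n).2
      have h2 : M ((v⁻¹ * (u * v)) ^ n) ≤ M ((v⁻¹) ^ n) + M ((u * v) ^ n) + 1 :=
        (F2 _ _ n).2
      have h3 : M ((u * v) ^ n) ≤ M (u ^ n) + M (v ^ n) + 1 := (F2 _ _ n).2
      have h4 := Minv u n
      have h5 := Minv v n
      omega
    have h4 : (4:ℤ) ≤ M (a ^ 4) := by
      apply hM2
      rw [show ((4:ℤ) = ((4:ℕ):ℤ)) by norm_num, zpow_natCast]
    have := Mdbound 4
    omega
  -- conclude
  rcases lt_trichotomy (x⁻¹ * y⁻¹ * x * y) 1 with h | h | h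
  · exfalso
    apply key y x
    have h1 : (1:G) = (x⁻¹ * y⁻¹ * x * y)⁻¹ * (x⁻¹ * y⁻¹ * x * y) := by group
    have h2 : (x⁻¹ * y⁻¹ * x * y)⁻¹ * (x⁻¹ * y⁻¹ * x * y) <
        (x⁻¹ * y⁻¹ * x * y)⁻¹ * 1 := hl _ h
    rw [← h1, mul_one] at h2
    have h3 : (x⁻¹ * y⁻¹ * x * y)⁻¹ = y⁻¹ * x⁻¹ * y * x := by group
    rw [h3] at h2
    exact h2
  · calc x * y = (y * x) * (x⁻¹ * y⁻¹ * x * y) := by group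
      _ = (y * x) * 1 := by rw [h]
      _ = y * x := mul_one _
  · exact absurd h (by simpa using key x y)

end Holder

section Helpers


/-- inverse of a strictly monotone homeomorphism is strictly monotone -/
theorem strictMono_homeo_symm {f : ℝ ≃ₜ ℝ} (hm : StrictMono (⇑f)) :
    StrictMono (⇑f.symm) := by
  intro s t hst
  by_contra hc
  push_neg at hc
  have := hm.monotone hc
  rw [Homeomorph.apply_symm_apply, Homeomorph.apply_symm_apply] at this
  exact absurd hst (not_lt.mpr this)

theorem contracting_lt {c : ℝ} (f : ℝ ≃ₜ ℝ) (hm : StrictMono (⇑f)) (hc : f c = c)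
    (h : TopContracting f) : ∀ x, c < x → f x < x := by
  obtain ⟨p, hp⟩ := h
  have hpc : p = c := by
    have h1 := hp c
    have h2 : (fun n => (⇑f)^[n] c) = fun _ => c :=
      funext fun n => Function.iterate_fixed hc n
    rw [h2] at h1
    exact tendsto_nhds_unique h1 tendsto_const_nhds
  subst hpc
  intro x hx
  rcases lt_trichotomy (f x) x with h1 | h1 | h1
  · exact h1
  · exfalso
    have h2 : (fun n => (⇑f)^[n] x) = fun _ => x :=
      funext fun n => Function.iterate_fixed h1 n
    have h3 := hp x
    rw [h2] at h3
    have h4 := tendsto_nhds_unique h3 tendsto_const_nhds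
    exact absurd h4 (ne_of_lt hx)
  · exfalso
    have hmono : ∀ n : ℕ, (⇑f)^[n] x < (⇑f)^[n+1] x := by
      intro n
      induction n with
      | zero => simpa using h1
      | succ k ih =>
        rw [Function.iterate_succ_apply', Function.iterate_succ_apply']
        exact hm ih
    have hge : ∀ n, x ≤ (⇑f)^[n] x := by
      intro n
      induction n with
      | zero => simp
      | succ k ih => exact ih.trans (hmono k).le
    have h3 := hp x
    have h4 : ∀ᶠ n in Filter.atTop, (⇑f)^[n] x ∈ Set.Iio x :=
      h3.eventually_mem (Iio_mem_nhds hx)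
    obtain ⟨n, hn⟩ := h4.exists
    exact absurd (hge n) (not_le.mpr hn)

theorem escape_lemma {c : ℝ} (f : ℝ → ℝ) (hcont : Continuous f)
    (hpos : ∀ t, c < t → t < f t) {x : ℝ} (hx : c < x) (y : ℝ) :
    ∃ n : ℕ, y < f^[n] x := by
  by_contra hcon
  push_neg at hcon
  have hgt : ∀ n, c < f^[n] x := by
    intro n
    induction n with
    | zero => simpa using hx
    | succ k ih => rw [Function.iterate_succ_apply']; exact ih.trans (hpos _ ih)
  have hmono : Monotone (fun n => f^[n] x) :=
    monotone_nat_of_le_succ fun n => by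
      rw [Function.iterate_succ_apply']; exact (hpos _ (hgt n)).le
  have hbdd : BddAbove (Set.range fun n => f^[n] x) :=
    ⟨y, by rintro z ⟨n, rfl⟩; exact hcon n⟩
  have htend : Filter.Tendsto (fun n => f^[n] x) Filter.atTop (nhds (⨆ n, f^[n] x)) :=
    tendsto_atTop_ciSup hmono hbdd
  have htend2 : Filter.Tendsto (fun n => f^[n+1] x) Filter.atTop (nhds (⨆ n, f^[n] x)) :=
    htend.comp (Filter.tendsto_add_atTop_nat 1)
  have htend3 : Filter.Tendsto (fun n => f (f^[n] x)) Filter.atTop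
      (nhds (f (⨆ n, f^[n] x))) :=
    (hcont.tendsto _).comp htend
  have heq : (fun n => f^[n+1] x) = fun n => f (f^[n] x) :=
    funext fun n => Function.iterate_succ_apply' f n x
  rw [heq] at htend2
  have hfL : f (⨆ n, f^[n] x) = ⨆ n, f^[n] x := tendsto_nhds_unique htend3 htend2
  have hcL : c < ⨆ n, f^[n] x := lt_of_lt_of_le (hgt 0) (le_ciSup hbdd 0)
  exact absurd hfL (ne_of_gt (hpos _ hcL))


end Helpers

/-- first coordinate map of a plane homeomorphism -/
noncomputable def coordA (w : (ℝ × ℝ) ≃ₜ (ℝ × ℝ)) (x : ℝ) : ℝ := (w (x, 0)).1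
/-- second coordinate map of a plane homeomorphism -/
noncomputable def coordB (w : (ℝ × ℝ) ≃ₜ (ℝ × ℝ)) (y : ℝ) : ℝ := (w (0, y)).2

/-- The subgroup of the stabilizer of the vertical line `{c} × ℝ` consisting of
elements whose two coordinate maps are both strictly increasing is abelian. -/
theorem leaf_stabilizer_orientation_preserving_abelian
    (G : Subgroup ((ℝ × ℝ) ≃ₜ (ℝ × ℝ)))
    (hprod : ∀ g ∈ G, ProductForm g)
    (hA1 : AxiomA1 G)
    (c : ℝ) :
    ∀ g₁ ∈ G, ∀ g₂ ∈ G,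
      ⇑g₁ '' {p : ℝ × ℝ | p.1 = c} = {p : ℝ × ℝ | p.1 = c} →
      ⇑g₂ '' {p : ℝ × ℝ | p.1 = c} = {p : ℝ × ℝ | p.1 = c} →
      (∃ f₁ f₂ : ℝ ≃ₜ ℝ, (∀ p : ℝ × ℝ, g₁ p = (f₁ p.1, f₂ p.2)) ∧
        StrictMono (f₁ : ℝ → ℝ) ∧ StrictMono (f₂ : ℝ → ℝ)) →
      (∃ f₁ f₂ : ℝ ≃ₜ ℝ, (∀ p : ℝ × ℝ, g₂ p = (f₁ p.1, f₂ p.2)) ∧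
        StrictMono (f₁ : ℝ → ℝ) ∧ StrictMono (f₂ : ℝ → ℝ)) →
      g₁ * g₂ = g₂ * g₁ := by
  intro g₁ hg₁ g₂ hg₂ hline₁ hline₂ hdec₁ hdec₂
  classical
  set W : Subgroup ((ℝ × ℝ) ≃ₜ (ℝ × ℝ)) := Subgroup.closure {g₁, g₂} with hW
  have hWG : ∀ w ∈ W, w ∈ G := by
    intro w hw
    refine (Subgroup.closure_le G).mpr ?_ hw
    intro z hz
    rcases hz with h | h
    · subst h; exact hg₁
    · rw [Set.mem_singleton_iff] at h; subst h; exact hg₂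
  -- product form pointwise formula via coordA/coordB
  have hform : ∀ w ∈ G, ∀ p : ℝ × ℝ, w p = (coordA w p.1, coordB w p.2) := by
    intro w hw p
    obtain ⟨f₁, f₂, hf⟩ := hprod w hw
    have e1 : coordA w p.1 = f₁ p.1 := by rw [coordA, hf (p.1, 0)]
    have e2 : coordB w p.2 = f₂ p.2 := by rw [coordB, hf (0, p.2)]
    rw [e1, e2, hf p]
  have hone : ∀ x : ℝ, coordA (1 : (ℝ × ℝ) ≃ₜ (ℝ × ℝ)) x = x := fun x => rfl
  have hcomp : ∀ u ∈ G, ∀ v ∈ G, ∀ x : ℝ, coordA (u * v) x = coordA u (coordA v x) := by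
    intro u hu v hv x
    have h1 : (u * v) (x, 0) = u (v (x, 0)) := rfl
    show ((u * v) (x, 0)).1 = coordA u (coordA v x)
    rw [h1, hform v hv (x, 0), hform u hu (coordA v (x, 0).1, coordB v (x, 0).2)]
  have hcompB : ∀ u ∈ G, ∀ v ∈ G, ∀ y : ℝ, coordB (u * v) y = coordB u (coordB v y) := by
    intro u hu v hv y
    have h1 : (u * v) (0, y) = u (v (0, y)) := rfl
    show ((u * v) (0, y)).2 = coordB u (coordB v y)
    rw [h1, hform v hv (0, y), hform u hu (coordA v (0, y).1, coordB v (0, y).2)]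
  -- the key property of elements of W
  have key : ∀ w ∈ W, StrictMono (coordA w) ∧ StrictMono (coordB w) ∧ coordA w c = c := by
    intro w hw
    rw [hW] at hw
    induction hw using Subgroup.closure_induction with
    | mem z hz =>
      have hgen : ∀ g ∈ G, ⇑g '' {p : ℝ × ℝ | p.1 = c} = {p : ℝ × ℝ | p.1 = c} →
          (∃ f₁ f₂ : ℝ ≃ₜ ℝ, (∀ p : ℝ × ℝ, g p = (f₁ p.1, f₂ p.2)) ∧
            StrictMono (f₁ : ℝ → ℝ) ∧ StrictMono (f₂ : ℝ → ℝ)) →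
          StrictMono (coordA g) ∧ StrictMono (coordB g) ∧ coordA g c = c := by
        intro g hg hline hdec
        obtain ⟨f₁, f₂, hf, hm1, hm2⟩ := hdec
        have e1 : coordA g = ⇑f₁ := funext fun x => by rw [coordA, hf (x, 0)]
        have e2 : coordB g = ⇑f₂ := funext fun y => by rw [coordB, hf (0, y)]
        refine ⟨e1 ▸ hm1, e2 ▸ hm2, ?_⟩
        have hmem : g (c, 0) ∈ {p : ℝ × ℝ | p.1 = c} := by
          rw [← hline]
          exact Set.mem_image_of_mem _ (by exact rfl)
        exact hmem
      rcases hz with h | h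
      · subst h; exact hgen _ hg₁ hline₁ hdec₁
      · rw [Set.mem_singleton_iff] at h; subst h; exact hgen _ hg₂ hline₂ hdec₂
    | one =>
      refine ⟨fun s t h => h, fun s t h => h, rfl⟩
    | mul x y hx hy ihx ihy =>
      have hxG : x ∈ G := hWG x (hW ▸ hx)
      have hyG : y ∈ G := hWG y (hW ▸ hy)
      obtain ⟨ax, bx, cx⟩ := ihx
      obtain ⟨ay, by', cy⟩ := ihy
      have eA : coordA (x * y) = coordA x ∘ coordA y := funext fun t => hcomp x hxG y hyG t
      have eB : coordB (x * y) = coordB x ∘ coordB y := funext fun t => hcompB x hxG y hyG t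
      refine ⟨eA ▸ ax.comp ay, eB ▸ bx.comp by', ?_⟩
      rw [hcomp x hxG y hyG c, cy, cx]
    | inv x hx ihx =>
      have hxG : x ∈ G := hWG x (hW ▸ hx)
      have hxiG : x⁻¹ ∈ G := G.inv_mem hxG
      obtain ⟨ax, bx, cx⟩ := ihx
      have hAid : ∀ t, coordA x (coordA x⁻¹ t) = t := by
        intro t
        have := hcomp x hxG x⁻¹ hxiG t
        rw [mul_inv_cancel] at this
        rw [← this, hone]
      have hAid' : ∀ t, coordA x⁻¹ (coordA x t) = t := by
        intro t
        have := hcomp x⁻¹ hxiG x hxG t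
        rw [inv_mul_cancel] at this
        rw [← this, hone]
      have hBid : ∀ t, coordB x (coordB x⁻¹ t) = t := by
        intro t
        have := hcompB x hxG x⁻¹ hxiG t
        rw [mul_inv_cancel] at this
        rw [← this]
        rfl
      refine ⟨?_, ?_, ?_⟩
      · intro s t hst
        by_contra hcon
        push_neg at hcon
        have := ax.monotone hcon
        rw [hAid, hAid] at this
        exact absurd hst (not_lt.mpr this)
      · intro s t hst
        by_contra hcon
        push_neg at hcon
        have := bx.monotone hcon
        rw [hBid, hBid] at this
        exact absurd hst (not_lt.mpr this)
      · have : coordA x (coordA x⁻¹ c) = coordA x c := by rw [hAid, cx]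
        exact ax.injective this
  -- dichotomy from Axiom A1
  have dich : ∀ w ∈ W, w ≠ 1 →
      (∀ t, c < t → t < coordA w t) ∨ (∀ t, c < t → coordA w t < t) := by
    intro w hw hne
    obtain ⟨f₁, f₂, hf⟩ := hprod w (hWG w hw)
    have e1 : coordA w = ⇑f₁ := funext fun x => by rw [coordA, hf (x, 0)]
    obtain ⟨hm1, hm2, hfix⟩ := key w hw
    have hf₁c : f₁ c = c := by rw [← e1]; exact hfix
    have hm1' : StrictMono ⇑f₁ := e1 ▸ hm1
    rcases hA1 w (hWG w hw) hne f₁ f₂ hf (Or.inl ⟨c, hf₁c⟩) with ⟨hcon, _⟩ | ⟨hexp, _⟩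
    · right; intro t ht; rw [e1]; exact contracting_lt f₁ hm1' hf₁c hcon t ht
    · left; intro t ht
      have hsm : StrictMono ⇑f₁.symm := strictMono_homeo_symm hm1'
      have hsc : f₁.symm c = c := by
        conv_lhs => rw [← hf₁c]
        rw [Homeomorph.symm_apply_apply]
      have h2 := contracting_lt f₁.symm hsm hsc hexp t ht
      rw [e1]
      have h3 := hm1' h2
      rwa [Homeomorph.apply_symm_apply] at h3
  -- basic facts for elements of W
  have hWmono : ∀ w ∈ W, StrictMono (coordA w) := fun w hw => (key w hw).1
  have hWfix : ∀ w ∈ W, coordA w c = c := fun w hw => (key w hw).2.2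
  have hmaps : ∀ w ∈ W, ∀ t, c < t → c < coordA w t := by
    intro w hw t ht
    have h1 := hWmono w hw ht
    rwa [hWfix w hw] at h1
  have hinvid : ∀ v ∈ W, ∀ s : ℝ, coordA v⁻¹ (coordA v s) = s := by
    intro v hv s
    have := hcomp v⁻¹ (hWG _ (W.inv_mem hv)) v (hWG v hv) s
    rw [inv_mul_cancel] at this
    rw [← this, hone]
  -- pointwise comparison propagates on (c, ∞)
  have hpoint : ∀ u ∈ W, ∀ v ∈ W, coordA u (c + 1) < coordA v (c + 1) →
      ∀ t, c < t → coordA u t < coordA v t := by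
    intro u hu v hv hlt t ht
    have hx₀ : c < c + 1 := lt_add_one c
    have hvi : v⁻¹ ∈ W := W.inv_mem hv
    have hvu : v⁻¹ * u ∈ W := W.mul_mem hvi hu
    have hdne : v⁻¹ * u ≠ 1 := by
      intro h
      have : u = v := (inv_mul_eq_one.mp h).symm
      rw [this] at hlt
      exact absurd hlt (lt_irrefl _)
    have h1 : coordA (v⁻¹ * u) (c + 1) < c + 1 := by
      rw [hcomp v⁻¹ (hWG _ hvi) u (hWG u hu)]
      have h2 := hWmono v⁻¹ hvi hlt
      rwa [hinvid v hv] at h2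
    rcases dich (v⁻¹ * u) hvu hdne with hpos | hneg
    · exact absurd h1 (not_lt.mpr (hpos _ hx₀).le)
    · have h2 : coordA (v⁻¹ * u) t < t := hneg t ht
      have e2 : coordA u t = coordA v (coordA (v⁻¹ * u) t) := by
        rw [← hcomp v (hWG v hv) (v⁻¹ * u) (hWG _ hvu), ← mul_assoc,
          mul_inv_cancel, one_mul]
      rw [e2]
      exact hWmono v hv h2
  -- the order on W
  let φ : ↥W → ℝ := fun w => coordA w.1 (c + 1)
  have hx₀ : c < c + 1 := lt_add_one c
  have hφinj : Function.Injective φ := by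
    intro u v h
    by_contra hne
    have hdne : (v : (ℝ × ℝ) ≃ₜ (ℝ × ℝ))⁻¹ * u ≠ 1 := by
      intro hh
      exact hne (Subtype.ext (inv_mul_eq_one.mp hh).symm)
    have hvu : (v : (ℝ × ℝ) ≃ₜ (ℝ × ℝ))⁻¹ * u ∈ W := W.mul_mem (W.inv_mem v.2) u.2
    have h1 : coordA ((v : (ℝ × ℝ) ≃ₜ (ℝ × ℝ))⁻¹ * u) (c + 1) = c + 1 := by
      rw [hcomp _ (hWG _ (W.inv_mem v.2)) _ (hWG _ u.2)]
      have : coordA u.1 (c + 1) = coordA v.1 (c + 1) := h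
      rw [this, hinvid v.1 v.2]
    rcases dich _ hvu hdne with hpos | hneg
    · exact absurd h1 (hpos _ hx₀).ne'
    · exact absurd h1 (hneg _ hx₀).ne
  letI : LinearOrder ↥W := LinearOrder.lift' φ hφinj
  have hltiff : ∀ u v : ↥W, u < v ↔ φ u < φ v := fun u v => Iff.rfl
  have hφmul : ∀ p q : ↥W, φ (p * q) = coordA p.1 (φ q) := by
    intro p q
    show coordA (p.1 * q.1) (c + 1) = coordA p.1 (coordA q.1 (c + 1))
    exact hcomp p.1 (hWG _ p.2) q.1 (hWG _ q.2) (c + 1)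
  have hlW : ∀ (a : ↥W) {b c' : ↥W}, b < c' → a * b < a * c' := by
    intro a b c' h
    rw [hltiff] at h ⊢
    rw [hφmul, hφmul]
    exact hWmono a.1 a.2 h
  have hrW : ∀ (a : ↥W) {b c' : ↥W}, b < c' → b * a < c' * a := by
    intro a b c' h
    rw [hltiff] at h ⊢
    rw [hφmul, hφmul]
    exact hpoint b.1 b.2 c'.1 c'.2 h (φ a) (hmaps a.1 a.2 (c + 1) hx₀)
  have hφ1 : φ (1 : ↥W) = c + 1 := rfl
  have harchW : ∀ a : ↥W, 1 < a → ∀ b : ↥W, ∃ n : ℕ, b < a ^ n := by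
    intro a ha b
    rw [hltiff, hφ1] at ha
    have hane : (a : (ℝ × ℝ) ≃ₜ (ℝ × ℝ)) ≠ 1 := by
      intro h
      have : φ a = φ (1 : ↥W) := by
        apply congrArg φ
        exact Subtype.ext h
      rw [hφ1] at this
      exact absurd ha (this ▸ lt_irrefl _)
    have hpos : ∀ t, c < t → t < coordA a.1 t := by
      rcases dich a.1 a.2 hane with hp | hn
      · exact hp
      · exact absurd ha (not_lt.mpr (hn _ hx₀).le)
    obtain ⟨f₁, f₂, hf⟩ := hprod a.1 (hWG _ a.2)
    have e1 : coordA a.1 = ⇑f₁ := funext fun x => by rw [coordA, hf (x, 0)]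
    have hcont : Continuous (coordA a.1) := e1 ▸ f₁.continuous
    obtain ⟨n, hn⟩ := escape_lemma (coordA a.1) hcont hpos hx₀ (φ b)
    refine ⟨n, ?_⟩
    rw [hltiff]
    have hiter : ∀ m : ℕ, φ (a ^ m) = (coordA a.1)^[m] (c + 1) := by
      intro m
      induction m with
      | zero =>
        rw [pow_zero, hφ1, Function.iterate_zero_apply]
      | succ k ih =>
        rw [pow_succ', hφmul, ih, Function.iterate_succ_apply']
    rw [hiter n]
    exact hn
  have hg₁W : g₁ ∈ W := Subgroup.subset_closure (by left; rfl)
  have hg₂W : g₂ ∈ W := Subgroup.subset_closure (by right; rfl)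
  have hcomm := holder_comm_s17 hlW hrW harchW (⟨g₁, hg₁W⟩ : ↥W) (⟨g₂, hg₂W⟩ : ↥W)
  exact Subtype.ext_iff.mp hcomm
end
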